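/- arXiv:1206.0102 — 10 statements merged into one kernel-verified Lean document; each statement's English description precedes it below -/
import Mathlib

section
/- Let n ≥ 2, σ > 0, c ∈ ℝ^{n-1} with c ≠ 0, and B ∈ S_{n-1} a real symmetric positive definite matrix. Then the function f(x) = cᵀx − σ·log(1 − xᵀB⁻¹x), defined on the open set {x ∈ ℝ^{n-1} : xᵀB⁻¹x < 1}, attains its minimum at the unique point x* = −((√(σ² + γ) − σ)/γ)·Bc, where γ = cᵀBc > 0. -/
open Matrix

/-- For `n ≥ 2`, `σ > 0`, `c ≠ 0` and `B` symmetric positive definite,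
the function `f(x) = cᵀx − σ·log(1 − xᵀB⁻¹x)` on `{x : xᵀB⁻¹x < 1}` attains its minimum
at the unique point `x* = −((√(σ² + γ) − σ)/γ)·Bc`, where `γ = cᵀBc > 0`. -/
theorem block_coordinate_minimizer (n : ℕ) (hn : 2 ≤ n) (σ : ℝ) (hσ : 0 < σ)
    (c : Fin (n - 1) → ℝ) (hc : c ≠ 0)
    (B : Matrix (Fin (n - 1)) (Fin (n - 1)) ℝ) (hBsymm : B.IsSymm) (hB : B.PosDef) :
    0 < c ⬝ᵥ B.mulVec c ∧
    ∀ γ : ℝ, γ = c ⬝ᵥ B.mulVec c →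
    ∀ xstar : Fin (n - 1) → ℝ,
      xstar = (-((Real.sqrt (σ ^ 2 + γ) - σ) / γ)) • B.mulVec c →
      xstar ⬝ᵥ B⁻¹.mulVec xstar < 1 ∧
      (∀ x : Fin (n - 1) → ℝ, x ⬝ᵥ B⁻¹.mulVec x < 1 →
        c ⬝ᵥ xstar - σ * Real.log (1 - xstar ⬝ᵥ B⁻¹.mulVec xstar)
          ≤ c ⬝ᵥ x - σ * Real.log (1 - x ⬝ᵥ B⁻¹.mulVec x)) ∧
      (∀ x : Fin (n - 1) → ℝ, x ⬝ᵥ B⁻¹.mulVec x < 1 →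
        c ⬝ᵥ x - σ * Real.log (1 - x ⬝ᵥ B⁻¹.mulVec x)
          = c ⬝ᵥ xstar - σ * Real.log (1 - xstar ⬝ᵥ B⁻¹.mulVec xstar) → x = xstar) := by
  classical
  -- positivity of γ
  have hγ0 : 0 < c ⬝ᵥ B.mulVec c := by
    have := hB.dotProduct_mulVec_pos hc
    simpa using this
  refine ⟨hγ0, ?_⟩
  intro γ hγ xstar hxs
  subst hγ
  set γ : ℝ := c ⬝ᵥ B.mulVec c with hγdef
  -- basic facts about A = B⁻¹
  set A : Matrix (Fin (n - 1)) (Fin (n - 1)) ℝ := B⁻¹ with hAdef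
  have hdet : IsUnit B.det := isUnit_iff_ne_zero.mpr hB.det_pos.ne'
  have hAB : A * B = 1 := Matrix.nonsing_inv_mul B hdet
  have hApd : A.PosDef := hB.inv
  have hAsymm : Aᵀ = A := by
    rw [hAdef, Matrix.transpose_nonsing_inv, hBsymm]
  have hpos : ∀ v : Fin (n - 1) → ℝ, v ≠ 0 → 0 < v ⬝ᵥ A.mulVec v := by
    intro v hv
    simpa using hApd.dotProduct_mulVec_pos hv
  have hnonneg : ∀ v : Fin (n - 1) → ℝ, 0 ≤ v ⬝ᵥ A.mulVec v := by
    intro v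
    by_cases hv : v = 0
    · simp [hv]
    · exact (hpos v hv).le
  have hsymmdot : ∀ u v : Fin (n - 1) → ℝ, u ⬝ᵥ A.mulVec v = v ⬝ᵥ A.mulVec u := by
    intro u v
    rw [Matrix.dotProduct_mulVec, ← Matrix.mulVec_transpose, hAsymm, dotProduct_comm]
  have hABc : A.mulVec (B.mulVec c) = c := by
    rw [Matrix.mulVec_mulVec, hAB, Matrix.one_mulVec]
  -- scalar facts
  set s : ℝ := Real.sqrt (σ ^ 2 + γ) with hsdef
  have hs2 : s ^ 2 = σ ^ 2 + γ := Real.sq_sqrt (by positivity)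
  have hsσ : σ < s := by
    nlinarith [Real.sqrt_nonneg (σ ^ 2 + γ)]
  set t : ℝ := (s - σ) / γ with htdef
  have hγt : γ * t = s - σ := by
    rw [htdef, mul_div_cancel₀ _ hγ0.ne']
  have ht0 : 0 < t := div_pos (by linarith) hγ0
  have hqt : γ * t ^ 2 = 1 - 2 * σ * t := by
    have h1 : (γ * t) ^ 2 = s ^ 2 - 2 * σ * s + σ ^ 2 := by rw [hγt]; ring
    have h2 : γ * (γ * t ^ 2) = γ * (1 - 2 * σ * t) := by nlinarith [hγt, hs2]
    exact mul_left_cancel₀ hγ0.ne' h2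
  -- facts about xstar
  have hxs' : xstar = (-t) • B.mulVec c := by rw [hxs]
  have hAxs : A.mulVec xstar = (-t) • c := by
    rw [hxs', Matrix.mulVec_smul, hABc]
  have hdots : ∀ v : Fin (n - 1) → ℝ, v ⬝ᵥ A.mulVec xstar = -t * (c ⬝ᵥ v) := by
    intro v
    rw [hAxs, dotProduct_smul, smul_eq_mul, dotProduct_comm]
  have hcx : c ⬝ᵥ xstar = -t * γ := by
    rw [hxs', dotProduct_smul, smul_eq_mul, ← hγdef]
  have hqstar : xstar ⬝ᵥ A.mulVec xstar = 1 - 2 * σ * t := by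
    rw [hdots xstar, hcx]
    linear_combination hqt
  have h1q : 1 - xstar ⬝ᵥ A.mulVec xstar = 2 * σ * t := by rw [hqstar]; ring
  have h1qpos : 0 < 1 - xstar ⬝ᵥ A.mulVec xstar := by rw [h1q]; positivity
  have hdomstar : xstar ⬝ᵥ A.mulVec xstar < 1 := by linarith
  -- quadratic expansion
  have key : ∀ x : Fin (n - 1) → ℝ,
      x ⬝ᵥ A.mulVec x - xstar ⬝ᵥ A.mulVec xstar
        = (x - xstar) ⬝ᵥ A.mulVec (x - xstar)
          - 2 * t * (c ⬝ᵥ x - c ⬝ᵥ xstar) := by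
    intro x
    have h1 : (x - xstar) ⬝ᵥ A.mulVec (x - xstar)
        = x ⬝ᵥ A.mulVec x - x ⬝ᵥ A.mulVec xstar - xstar ⬝ᵥ A.mulVec x
          + xstar ⬝ᵥ A.mulVec xstar := by
      simp only [Matrix.mulVec_sub, dotProduct_sub, sub_dotProduct]
      ring
    have h2 : x ⬝ᵥ A.mulVec xstar = -t * (c ⬝ᵥ x) := hdots x
    have h3 : xstar ⬝ᵥ A.mulVec x = -t * (c ⬝ᵥ x) := by rw [hsymmdot, h2]
    have h4 : xstar ⬝ᵥ A.mulVec xstar = -t * (c ⬝ᵥ xstar) := hdots xstar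
    rw [h1, h2, h3]
    linear_combination (-2 : ℝ) * h4
  -- the master inequality, for every x in the domain
  have master : ∀ x : Fin (n - 1) → ℝ, x ⬝ᵥ A.mulVec x < 1 →
      2 * σ * t * (Real.log (1 - x ⬝ᵥ A.mulVec x)
          - Real.log (1 - xstar ⬝ᵥ A.mulVec xstar))
        ≤ 2 * t * (c ⬝ᵥ x - c ⬝ᵥ xstar)
          - (x - xstar) ⬝ᵥ A.mulVec (x - xstar) := by
    intro x hx
    have hx1 : 0 < 1 - x ⬝ᵥ A.mulVec x := by linarith
    set u : ℝ := (1 - x ⬝ᵥ A.mulVec x) / (1 - xstar ⬝ᵥ A.mulVec xstar) with hudef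
    have hu0 : 0 < u := div_pos hx1 h1qpos
    have hlogu : Real.log u = Real.log (1 - x ⬝ᵥ A.mulVec x)
        - Real.log (1 - xstar ⬝ᵥ A.mulVec xstar) :=
      Real.log_div hx1.ne' h1qpos.ne'
    have hloga : Real.log u ≤ u - 1 := Real.log_le_sub_one_of_pos hu0
    have huval : (1 - xstar ⬝ᵥ A.mulVec xstar) * u = 1 - x ⬝ᵥ A.mulVec x := by
      rw [hudef]; field_simp
    have hmul : (1 - xstar ⬝ᵥ A.mulVec xstar) * Real.log u
        ≤ (1 - x ⬝ᵥ A.mulVec x) - (1 - xstar ⬝ᵥ A.mulVec xstar) := by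
      have := mul_le_mul_of_nonneg_left hloga h1qpos.le
      nlinarith [huval]
    rw [← hlogu, ← h1q]
    have hk := key x
    linarith [hmul, hk]
  constructor
  · exact hdomstar
  constructor
  · intro x hx
    have hm := master x hx
    have hQ : 0 ≤ (x - xstar) ⬝ᵥ A.mulVec (x - xstar) := hnonneg _
    nlinarith [hm, hQ, ht0, hσ]
  · intro x hx heq
    have hm := master x hx
    have hQ : (x - xstar) ⬝ᵥ A.mulVec (x - xstar) ≤ 0 := by
      have hL : σ * (Real.log (1 - x ⬝ᵥ A.mulVec x)
          - Real.log (1 - xstar ⬝ᵥ A.mulVec xstar))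
          = c ⬝ᵥ x - c ⬝ᵥ xstar := by linarith [heq]
      nlinarith [hm, hL, ht0]
    by_contra hne
    have hd : x - xstar ≠ 0 := sub_ne_zero.mpr hne
    exact absurd hQ (not_le.mpr (hpos _ hd))
end

section
/- Let A ∈ ℂ^{n×p} and let A† denote its Moore–Penrose pseudoinverse. Define F = {V ∈ H_n : (I − AA†) V (I − AA†) = 0}. Then for every Hermitian matrix V ∈ H_n with V ⪰ 0, the distance from V to F in the trace norm satisfies d₁(V, F) = Tr(V(I − AA†)), where d₁(V, F) = inf_{W ∈ F} ‖V − W‖₁. -/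
open Matrix ComplexOrder

/-- The trace (nuclear) norm of a complex square matrix: the sum of its singular values,
i.e. of the square roots of the eigenvalues of `Mᴴ * M`. -/
noncomputable def traceNorm {n : ℕ} (M : Matrix (Fin n) (Fin n) ℂ) : ℝ :=
  ∑ i, Real.sqrt ((Matrix.posSemidef_conjTranspose_mul_self M).1.eigenvalues i)

namespace ForDistToF

variable {n : ℕ}

open scoped MatrixOrder

lemma trace_conj (U B : Matrix (Fin n) (Fin n) ℂ) (hU : star U * U = 1) :
    Matrix.trace (U * B * star U) = Matrix.trace B := by
  rw [Matrix.trace_mul_cycle, hU, Matrix.one_mul]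

lemma trace_conj' (U B : Matrix (Fin n) (Fin n) ℂ) (hU : U * star U = 1) :
    Matrix.trace (star U * B * U) = Matrix.trace B := by
  rw [Matrix.trace_mul_cycle, hU, Matrix.one_mul]

lemma re_trace_sqrt {M : Matrix (Fin n) (Fin n) ℂ} (hM : M.PosSemidef) :
    (Matrix.trace (CFC.sqrt M)).re = ∑ i, Real.sqrt (hM.1.eigenvalues i) := by
  rw [CFC.sqrt_eq_cfc, cfc_nnreal_eq_real _ M, hM.1.cfc_eq, IsHermitian.cfc,
    Unitary.conjStarAlgAut_apply,
    trace_conj _ _ (Unitary.mem_iff.mp hM.1.eigenvectorUnitary.2).1,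
    Matrix.trace_diagonal, Complex.re_sum]
  norm_num
  exact Finset.sum_congr rfl fun i _ => by rw [max_eq_left (hM.eigenvalues_nonneg i)]

lemma traceNorm_eq_re_trace_sqrt (M : Matrix (Fin n) (Fin n) ℂ) :
    traceNorm M = (Matrix.trace (CFC.sqrt (Mᴴ * M))).re := by
  rw [re_trace_sqrt (Matrix.posSemidef_conjTranspose_mul_self M)]; rfl

lemma traceNorm_of_posSemidef {M : Matrix (Fin n) (Fin n) ℂ} (hM : M.PosSemidef) :
    traceNorm M = (Matrix.trace M).re := by
  have h : M = CFC.sqrt (Mᴴ * M) :=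
    (CFC.sqrt_unique (by rw [hM.1]) hM.nonneg).symm
  rw [traceNorm_eq_re_trace_sqrt, ← h]

lemma traceNorm_hermitian {H : Matrix (Fin n) (Fin n) ℂ} (hH : H.IsHermitian) :
    traceNorm H = ∑ i, |hH.eigenvalues i| := by
  have hmem := hH.eigenvectorUnitary.2
  rw [Unitary.mem_iff] at hmem
  have hcanc : ∀ X : Matrix (Fin n) (Fin n) ℂ,
      star (hH.eigenvectorUnitary : Matrix (Fin n) (Fin n) ℂ)
        * ((hH.eigenvectorUnitary : Matrix (Fin n) (Fin n) ℂ) * X) = X := fun X => by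
    rw [← Matrix.mul_assoc, hmem.1, Matrix.one_mul]
  set B : Matrix (Fin n) (Fin n) ℂ :=
    (hH.eigenvectorUnitary : Matrix (Fin n) (Fin n) ℂ)
      * Matrix.diagonal (RCLike.ofReal ∘ (fun i => |hH.eigenvalues i|))
      * star (hH.eigenvectorUnitary : Matrix (Fin n) (Fin n) ℂ) with hBdef
  have hBpsd : B.PosSemidef := by
    have hd : Matrix.PosSemidef (Matrix.diagonal (RCLike.ofReal ∘ (fun i => |hH.eigenvalues i|))
        : Matrix (Fin n) (Fin n) ℂ) := by
      refine Matrix.PosSemidef.diagonal fun i => ?_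
      simp only [Pi.zero_apply, Function.comp_apply]
      rw [show (RCLike.ofReal |hH.eigenvalues i| : ℂ) = ((|hH.eigenvalues i| : ℝ) : ℂ) from rfl,
        Complex.zero_le_real]
      exact abs_nonneg _
    have := hd.mul_mul_conjTranspose_same (hH.eigenvectorUnitary : Matrix (Fin n) (Fin n) ℂ)
    rwa [← Matrix.star_eq_conjTranspose, ← hBdef] at this
  have hDD : (Matrix.diagonal (RCLike.ofReal ∘ (fun i => |hH.eigenvalues i|))
        : Matrix (Fin n) (Fin n) ℂ)
      * Matrix.diagonal (RCLike.ofReal ∘ (fun i => |hH.eigenvalues i|))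
      = Matrix.diagonal (RCLike.ofReal ∘ hH.eigenvalues)
        * Matrix.diagonal (RCLike.ofReal ∘ hH.eigenvalues) := by
    rw [Matrix.diagonal_mul_diagonal, Matrix.diagonal_mul_diagonal]
    refine congrArg Matrix.diagonal (funext fun i => ?_)
    simp only [Pi.mul_apply, Function.comp_apply]
    rw [← RCLike.ofReal_mul, ← RCLike.ofReal_mul, abs_mul_abs_self]
  have hsq : B ^ 2 = Hᴴ * H := by
    rw [hH.eq, pow_two, hBdef]
    conv_rhs => rw [hH.spectral_theorem, Unitary.conjStarAlgAut_apply]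
    calc (hH.eigenvectorUnitary : Matrix (Fin n) (Fin n) ℂ)
          * Matrix.diagonal (RCLike.ofReal ∘ (fun i => |hH.eigenvalues i|))
          * star (hH.eigenvectorUnitary : Matrix (Fin n) (Fin n) ℂ)
          * ((hH.eigenvectorUnitary : Matrix (Fin n) (Fin n) ℂ)
            * Matrix.diagonal (RCLike.ofReal ∘ (fun i => |hH.eigenvalues i|))
            * star (hH.eigenvectorUnitary : Matrix (Fin n) (Fin n) ℂ))
        = (hH.eigenvectorUnitary : Matrix (Fin n) (Fin n) ℂ)
          * (Matrix.diagonal (RCLike.ofReal ∘ (fun i => |hH.eigenvalues i|))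
            * Matrix.diagonal (RCLike.ofReal ∘ (fun i => |hH.eigenvalues i|)))
          * star (hH.eigenvectorUnitary : Matrix (Fin n) (Fin n) ℂ) := by
          simp only [Matrix.mul_assoc, hcanc]
      _ = (hH.eigenvectorUnitary : Matrix (Fin n) (Fin n) ℂ)
          * (Matrix.diagonal (RCLike.ofReal ∘ hH.eigenvalues)
            * Matrix.diagonal (RCLike.ofReal ∘ hH.eigenvalues))
          * star (hH.eigenvectorUnitary : Matrix (Fin n) (Fin n) ℂ) := by rw [hDD]
      _ = (hH.eigenvectorUnitary : Matrix (Fin n) (Fin n) ℂ)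
          * Matrix.diagonal (RCLike.ofReal ∘ hH.eigenvalues)
          * star (hH.eigenvectorUnitary : Matrix (Fin n) (Fin n) ℂ)
          * ((hH.eigenvectorUnitary : Matrix (Fin n) (Fin n) ℂ)
            * Matrix.diagonal (RCLike.ofReal ∘ hH.eigenvalues)
            * star (hH.eigenvectorUnitary : Matrix (Fin n) (Fin n) ℂ)) := by
          simp only [Matrix.mul_assoc, hcanc]
  have hBs : B = CFC.sqrt (Hᴴ * H) :=
    (CFC.sqrt_unique (by rw [← pow_two]; exact hsq) hBpsd.nonneg).symm
  rw [traceNorm_eq_re_trace_sqrt, ← hBs, hBdef,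
    trace_conj _ _ hmem.1, Matrix.trace_diagonal, Complex.re_sum]
  norm_num

lemma diag_nonneg {Q : Matrix (Fin n) (Fin n) ℂ} (hQ : Q.PosSemidef) (i : Fin n) :
    0 ≤ Q i i := by
  have := hQ.2 (Finsupp.single i 1)
  simpa [dotProduct, Matrix.mulVec, Pi.single_apply, mul_ite, ite_mul,
    Finset.sum_ite_eq, Finset.sum_ite_eq'] using this

lemma re_trace_mul_proj_le {H P : Matrix (Fin n) (Fin n) ℂ} (hH : H.IsHermitian)
    (hP : P.PosSemidef) (hP1 : ((1 : Matrix (Fin n) (Fin n) ℂ) - P).PosSemidef) :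
    (Matrix.trace (H * P)).re ≤ traceNorm H := by
  have hmem := hH.eigenvectorUnitary.2
  rw [Unitary.mem_iff] at hmem
  have hcanc2 : ∀ X : Matrix (Fin n) (Fin n) ℂ,
      (hH.eigenvectorUnitary : Matrix (Fin n) (Fin n) ℂ)
        * (star (hH.eigenvectorUnitary : Matrix (Fin n) (Fin n) ℂ) * X) = X := fun X => by
    rw [← Matrix.mul_assoc, hmem.2, Matrix.one_mul]
  set U : Matrix (Fin n) (Fin n) ℂ := (hH.eigenvectorUnitary : Matrix (Fin n) (Fin n) ℂ)
    with hUdef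
  set Q : Matrix (Fin n) (Fin n) ℂ := star U * P * U with hQdef
  have hQ : Q.PosSemidef := by
    have := hP.conjTranspose_mul_mul_same U
    rwa [← Matrix.star_eq_conjTranspose] at this
  have hQ1 : ((1 : Matrix (Fin n) (Fin n) ℂ) - Q).PosSemidef := by
    have := hP1.conjTranspose_mul_mul_same U
    rw [← Matrix.star_eq_conjTranspose] at this
    rwa [Matrix.mul_sub, Matrix.mul_one, Matrix.sub_mul, hmem.1] at this
  have hDQ : Matrix.diagonal (RCLike.ofReal ∘ hH.eigenvalues) * Q
      = star U * (H * P) * U := by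
    conv_lhs => rw [← hH.conjStarAlgAut_star_eigenvectorUnitary, Unitary.conjStarAlgAut_star_apply, ← hUdef]
    rw [hQdef]
    simp only [Matrix.mul_assoc, hcanc2]
  have htr : Matrix.trace (H * P)
      = Matrix.trace (Matrix.diagonal (RCLike.ofReal ∘ hH.eigenvalues) * Q) := by
    rw [hDQ, trace_conj' _ _ hmem.2]
  rw [htr]
  have hdiag : Matrix.trace (Matrix.diagonal (RCLike.ofReal ∘ hH.eigenvalues) * Q)
      = ∑ i, (hH.eigenvalues i : ℂ) * Q i i := by
    rw [Matrix.trace]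
    congr 1
    funext i
    simp [Matrix.diag, Matrix.diagonal_mul]
  rw [hdiag, Complex.re_sum, traceNorm_hermitian hH]
  apply Finset.sum_le_sum
  intro i _
  have h0 : 0 ≤ (Q i i).re := by
    have := diag_nonneg hQ i
    rw [Complex.le_def] at this
    simpa using this.1
  have h1 : (Q i i).re ≤ 1 := by
    have h := diag_nonneg hQ1 i
    rw [Complex.le_def] at h
    have h' := h.1
    simp only [Matrix.sub_apply, Matrix.one_apply_eq, Complex.sub_re, Complex.one_re,
      Complex.zero_re] at h'
    linarith
  have hre : ((hH.eigenvalues i : ℂ) * Q i i).re = hH.eigenvalues i * (Q i i).re := by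
    simp [Complex.mul_re]
  rw [hre]
  calc hH.eigenvalues i * (Q i i).re ≤ |hH.eigenvalues i| * (Q i i).re :=
        mul_le_mul_of_nonneg_right (le_abs_self _) h0
    _ ≤ |hH.eigenvalues i| * 1 := mul_le_mul_of_nonneg_left h1 (abs_nonneg _)
    _ = |hH.eigenvalues i| := mul_one _

end ForDistToF

open ForDistToF in
/-- For `F = {W ∈ H_n : (I − AA†) W (I − AA†) = 0}` and every positive
semidefinite Hermitian `V`, the trace-norm distance from `V` to `F` equals
`Tr(V(I − AA†))`.  Here `Ad` is the Moore–Penrose pseudoinverse of `A`, characterized by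
the four Penrose conditions. -/
theorem dist_to_F_eq_trace {n p : ℕ}
    (A : Matrix (Fin n) (Fin p) ℂ) (Ad : Matrix (Fin p) (Fin n) ℂ)
    (hPenrose : A * Ad * A = A ∧ Ad * A * Ad = Ad ∧
      (A * Ad)ᴴ = A * Ad ∧ (Ad * A)ᴴ = Ad * A)
    (V : Matrix (Fin n) (Fin n) ℂ) (hV : V.PosSemidef) :
    sInf {r : ℝ | ∃ W : Matrix (Fin n) (Fin n) ℂ, W.IsHermitian ∧
        (1 - A * Ad) * W * (1 - A * Ad) = 0 ∧ r = traceNorm (V - W)} =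
      (Matrix.trace (V * (1 - A * Ad))).re := by
  set B : Matrix (Fin n) (Fin n) ℂ := A * Ad with hBdef
  set P : Matrix (Fin n) (Fin n) ℂ := 1 - B with hPdef
  have hBH : Bᴴ = B := hPenrose.2.2.1
  have hBB : B * B = B := by
    calc B * B = A * (Ad * A * Ad) := by rw [hBdef]; simp only [Matrix.mul_assoc]
      _ = A * Ad := by rw [hPenrose.2.1]
      _ = B := hBdef.symm
  have hPH : Pᴴ = P := by
    rw [hPdef, Matrix.conjTranspose_sub, Matrix.conjTranspose_one, hBH]
  have hPP : P * P = P := by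
    have h : ((1 : Matrix (Fin n) (Fin n) ℂ) - B) * (1 - B) = 1 - B - B + B * B := by
      noncomm_ring
    rw [hPdef, h, hBB]
    abel
  have hPpsd : P.PosSemidef := by
    have := Matrix.posSemidef_conjTranspose_mul_self P
    rwa [hPH, hPP] at this
  have hBpsd : ((1 : Matrix (Fin n) (Fin n) ℂ) - P).PosSemidef := by
    have h1P : (1 : Matrix (Fin n) (Fin n) ℂ) - P = B := by rw [hPdef]; abel
    rw [h1P]
    have := Matrix.posSemidef_conjTranspose_mul_self B
    rwa [hBH, hBB] at this
  have htrW : ∀ W : Matrix (Fin n) (Fin n) ℂ, P * W * P = 0 →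
      Matrix.trace (W * P) = 0 := by
    intro W hW
    have h : Matrix.trace (W * P) = Matrix.trace (P * W * P) := by
      conv_lhs => rw [← hPP]
      rw [← Matrix.mul_assoc, Matrix.trace_mul_comm, ← Matrix.mul_assoc]
    rw [h, hW, Matrix.trace_zero]
  have hPVP : (P * V * P).PosSemidef := by
    have := hV.mul_mul_conjTranspose_same P
    rwa [hPH] at this
  have hPPa : ∀ X : Matrix (Fin n) (Fin n) ℂ, P * (P * X) = P * X := fun X => by
    rw [← Matrix.mul_assoc, hPP]
  have htrPVP : Matrix.trace (P * V * P) = Matrix.trace (V * P) := by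
    rw [Matrix.trace_mul_cycle, hPP, Matrix.trace_mul_comm]
  have hmem : (Matrix.trace (V * P)).re ∈ {r : ℝ | ∃ W : Matrix (Fin n) (Fin n) ℂ,
      W.IsHermitian ∧ P * W * P = 0 ∧ r = traceNorm (V - W)} := by
    refine ⟨V - P * V * P, hV.1.sub hPVP.1, ?_, ?_⟩
    · simp only [Matrix.mul_sub, Matrix.sub_mul, Matrix.mul_assoc, hPPa, hPP]
      abel
    · have hsub : V - (V - P * V * P) = P * V * P := by abel
      rw [hsub, traceNorm_of_posSemidef hPVP, htrPVP]
  have hlb : ∀ r ∈ {r : ℝ | ∃ W : Matrix (Fin n) (Fin n) ℂ, W.IsHermitian ∧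
      P * W * P = 0 ∧ r = traceNorm (V - W)},
      (Matrix.trace (V * P)).re ≤ r := by
    rintro r ⟨W, hWh, hWF, rfl⟩
    have key := re_trace_mul_proj_le (hV.1.sub hWh) hPpsd hBpsd
    have htr : Matrix.trace ((V - W) * P) = Matrix.trace (V * P) := by
      rw [Matrix.sub_mul, Matrix.trace_sub, htrW W hWF, sub_zero]
    rw [htr] at key
    exact key
  exact le_antisymm (csInf_le ⟨(Matrix.trace (V * P)).re, hlb⟩ hmem)
    (le_csInf ⟨_, hmem⟩ hlb)
end

section
/- Let A ∈ ℂ^{n×p} be injective and b ∈ ℝⁿ with b_i ≠ 0 for i = 1,…,n, and assume there exists x ∈ ℂ^p with |Ax| = b (entrywise moduli). Let a_i* denote the i-th row of A and M = diag(b)(I − AA†)diag(b). Then the map Φ : H_p → H_n, Φ(X) = diag(b)⁻¹ A X A* diag(b)⁻¹, is a bijection from the set {X ∈ H_p : X ⪰ 0, Tr(a_i a_i* X) = b_i² for i = 1,…,n} (the feasible set of PhaseLift) onto the set {U ∈ H_n : U ⪰ 0, diag(U) = 1, Tr(MU) = 0} (the feasible set of PhaseCutMod). -/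
open Matrix ComplexOrder

lemma aux_col_eq {n : ℕ} (M : Matrix (Fin n) (Fin n) ℂ) (j : Fin n) :
    (Mᴴ * M) j j = star (fun i => M i j) ⬝ᵥ (fun i => M i j) := by
  simp [Matrix.mul_apply, Matrix.conjTranspose_apply, dotProduct]

lemma aux_trace_ct_mul_self {n : ℕ} (M : Matrix (Fin n) (Fin n) ℂ)
    (h : Matrix.trace (Mᴴ * M) = 0) : M = 0 := by
  have hnn : ∀ j ∈ Finset.univ, (0:ℂ) ≤ (Mᴴ * M) j j := fun j _ => by
    rw [aux_col_eq]; exact dotProduct_star_self_nonneg _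
  have hdiag : ∀ j ∈ Finset.univ, (Mᴴ * M) j j = 0 :=
    (Finset.sum_eq_zero_iff_of_nonneg hnn).mp h
  ext i j
  have := (dotProduct_star_self_eq_zero.mp ((aux_col_eq M j) ▸ hdiag j (Finset.mem_univ j)))
  exact congrFun this i

lemma aux_sq_sq {n : ℕ} (T S : Matrix (Fin n) (Fin n) ℂ)
    (hTH : Tᴴ = T) (hSH : Sᴴ = S)
    (h : Matrix.trace ((T * T) * (S * S)) = 0) : (T * T) * (S * S) = 0 := by
  have h2 : Matrix.trace ((T * S)ᴴ * (T * S)) = 0 := by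
    rw [conjTranspose_mul, hTH, hSH]
    calc Matrix.trace (S * T * (T * S)) = Matrix.trace (S * (T * (T * S))) := by
          simp only [Matrix.mul_assoc]
      _ = Matrix.trace ((T * (T * S)) * S) := trace_mul_comm _ _
      _ = Matrix.trace ((T * T) * (S * S)) := by simp only [Matrix.mul_assoc]
      _ = 0 := h
  have hTS : T * S = 0 := aux_trace_ct_mul_self _ h2
  calc (T * T) * (S * S) = T * ((T * S) * S) := by simp only [Matrix.mul_assoc]
    _ = 0 := by rw [hTS, Matrix.zero_mul, Matrix.mul_zero]

lemma aux_psd_trace_mul {n : ℕ} {P U : Matrix (Fin n) (Fin n) ℂ}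
    (hP : P.PosSemidef) (hU : U.PosSemidef) (h : Matrix.trace (P * U) = 0) :
    P * U = 0 := by
  open scoped MatrixOrder in
  (have := aux_sq_sq (CFC.sqrt P) (CFC.sqrt U) (CFC.sqrt_nonneg P).posSemidef.1
      (CFC.sqrt_nonneg U).posSemidef.1
      (by rw [CFC.sqrt_mul_sqrt_self P hP.nonneg, CFC.sqrt_mul_sqrt_self U hU.nonneg]; exact h)
   rwa [CFC.sqrt_mul_sqrt_self P hP.nonneg, CFC.sqrt_mul_sqrt_self U hU.nonneg] at this)

lemma aux_trace_vecMulVec {n p : ℕ} (A : Matrix (Fin n) (Fin p) ℂ)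
    (X : Matrix (Fin p) (Fin p) ℂ) (i : Fin n) :
    Matrix.trace (Matrix.vecMulVec (star (A i)) (A i) * X) = (A * X * Aᴴ) i i := by
  simp only [Matrix.trace, Matrix.diag, Matrix.mul_apply, Matrix.vecMulVec_apply,
    Matrix.conjTranspose_apply, Pi.star_apply, Finset.sum_mul, Finset.mul_sum]
  exact Finset.sum_congr rfl fun j _ => Finset.sum_congr rfl fun k _ => by ring

/-- If `A` is injective, all `bᵢ ≠ 0`, and `|Ax| = b` is solvable, then
`Φ(X) = diag(b)⁻¹ A X A* diag(b)⁻¹` is a bijection from the PhaseLift feasible set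
`{X ⪰ 0 : Tr(aᵢaᵢ*X) = bᵢ²}` onto the PhaseCutMod feasible set
`{U ⪰ 0 : diag(U) = 1, Tr(MU) = 0}`, where `M = diag(b)(I − AA†)diag(b)` and `aᵢ*` is
the `i`-th row of `A`. -/
theorem phaselift_phasecutmod_bijection {n p : ℕ}
    (A : Matrix (Fin n) (Fin p) ℂ) (Ad : Matrix (Fin p) (Fin n) ℂ)
    (hPenrose : A * Ad * A = A ∧ Ad * A * Ad = Ad ∧
      (A * Ad)ᴴ = A * Ad ∧ (Ad * A)ᴴ = Ad * A)
    (hinj : Function.Injective A.mulVec)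
    (b : Fin n → ℝ) (hb : ∀ i, b i ≠ 0)
    (x : Fin p → ℂ) (hx : ∀ i, ‖A.mulVec x i‖ = b i) :
    Set.BijOn
      (fun X : Matrix (Fin p) (Fin p) ℂ =>
        (Matrix.diagonal fun i => (b i : ℂ))⁻¹ * (A * X * Aᴴ) *
          (Matrix.diagonal fun i => (b i : ℂ))⁻¹)
      {X : Matrix (Fin p) (Fin p) ℂ | X.PosSemidef ∧
        ∀ i, Matrix.trace (Matrix.vecMulVec (star (A i)) (A i) * X) = ((b i : ℂ)) ^ 2}
      {U : Matrix (Fin n) (Fin n) ℂ | U.PosSemidef ∧ (∀ i, U i i = 1) ∧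
        Matrix.trace ((Matrix.diagonal fun i => (b i : ℂ)) * (1 - A * Ad) *
          (Matrix.diagonal fun i => (b i : ℂ)) * U) = 0} := by
  obtain ⟨hP1, hP2, hP3, hP4⟩ := hPenrose
  set D : Matrix (Fin n) (Fin n) ℂ := Matrix.diagonal fun i => (b i : ℂ) with hD
  set E : Matrix (Fin n) (Fin n) ℂ := Matrix.diagonal fun i => ((b i : ℂ))⁻¹ with hE
  have hbC : ∀ i, (b i : ℂ) ≠ 0 := fun i => Complex.ofReal_ne_zero.mpr (hb i)
  have hDE : D * E = 1 := by
    rw [hD, hE, Matrix.diagonal_mul_diagonal,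
      show (fun i => (b i : ℂ) * ((b i : ℂ))⁻¹) = fun _ => (1:ℂ) from
        funext fun i => mul_inv_cancel₀ (hbC i), Matrix.diagonal_one]
  have hED : E * D = 1 := by
    rw [hD, hE, Matrix.diagonal_mul_diagonal,
      show (fun i => ((b i : ℂ))⁻¹ * (b i : ℂ)) = fun _ => (1:ℂ) from
        funext fun i => inv_mul_cancel₀ (hbC i), Matrix.diagonal_one]
  have hDinv : D⁻¹ = E := Matrix.inv_eq_right_inv hDE
  have hDH : Dᴴ = D := by
    rw [hD, Matrix.diagonal_conjTranspose,
      show (star fun i => (b i : ℂ)) = fun i => (b i : ℂ) from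
        funext fun i => by simp [Complex.conj_ofReal]]
  have hEH : Eᴴ = E := by
    rw [hE, Matrix.diagonal_conjTranspose,
      show (star fun i => ((b i : ℂ))⁻¹) = fun i => ((b i : ℂ))⁻¹ from
        funext fun i => by simp [Complex.conj_ofReal]]
  have hAdA : Ad * A = 1 := by
    have hv : ∀ v, (Ad * A) *ᵥ v = v := fun v => by
      apply hinj
      rw [Matrix.mulVec_mulVec, ← Matrix.mul_assoc, hP1]
    ext i j
    have := congrFun (hv (Pi.single j 1)) i
    simpa [Matrix.mulVec_single, Matrix.one_apply, Pi.single_apply, eq_comm] using this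
  have hAAdH : Aᴴ * Adᴴ = 1 := by
    rw [← Matrix.conjTranspose_mul, hAdA, Matrix.conjTranspose_one]
  have hrec : ∀ X : Matrix (Fin p) (Fin p) ℂ, Ad * (A * X * Aᴴ) * Adᴴ = X := fun X => by
    calc Ad * (A * X * Aᴴ) * Adᴴ = (Ad * A) * (X * (Aᴴ * Adᴴ)) := by
          simp only [Matrix.mul_assoc]
      _ = X := by rw [hAdA, hAAdH, Matrix.one_mul, Matrix.mul_one]
  have hEWE : ∀ (W : Matrix (Fin n) (Fin n) ℂ) i, (E * W * E) i i
      = ((b i : ℂ))⁻¹ * W i i * ((b i : ℂ))⁻¹ := fun W i => by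
    rw [hE, Matrix.mul_diagonal, Matrix.diagonal_mul]
  have hDWD : ∀ (W : Matrix (Fin n) (Fin n) ℂ) i, (D * W * D) i i
      = (b i : ℂ) * W i i * (b i : ℂ) := fun W i => by
    rw [hD, Matrix.mul_diagonal, Matrix.diagonal_mul]
  have hDED : ∀ W : Matrix (Fin n) (Fin n) ℂ, D * (E * W * E) * D = W := fun W => by
    calc D * (E * W * E) * D = (D * E) * (W * (E * D)) := by simp only [Matrix.mul_assoc]
      _ = W := by rw [hDE, hED, Matrix.one_mul, Matrix.mul_one]
  have hEDE : ∀ W : Matrix (Fin n) (Fin n) ℂ, E * (D * W * D) * E = W := fun W => by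
    calc E * (D * W * D) * E = (E * D) * (W * (D * E)) := by simp only [Matrix.mul_assoc]
      _ = W := by rw [hED, hDE, Matrix.one_mul, Matrix.mul_one]
  have hQA : (1 - A * Ad) * A = 0 := by
    rw [Matrix.sub_mul, Matrix.one_mul, hP1, sub_self]
  constructor
  · -- MapsTo
    rintro X ⟨hX, htr⟩
    simp only [Set.mem_setOf_eq, hDinv]
    have hform : E * (A * X * Aᴴ) * E = (E * A) * X * (E * A)ᴴ := by
      rw [Matrix.conjTranspose_mul, hEH]; simp only [Matrix.mul_assoc]
    refine ⟨?_, ?_, ?_⟩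
    · rw [hform]; exact hX.mul_mul_conjTranspose_same (E * A)
    · intro i
      rw [hEWE, ← aux_trace_vecMulVec A X i, htr i, pow_two]
      field_simp
      exact div_self (hbC i)
    · have hzero : D * (1 - A * Ad) * D * (E * (A * X * Aᴴ) * E) = 0 := by
        calc D * (1 - A * Ad) * D * (E * (A * X * Aᴴ) * E)
            = D * ((1 - A * Ad) * ((D * E) * (A * (X * (Aᴴ * E))))) := by
              simp only [Matrix.mul_assoc]
          _ = D * (((1 - A * Ad) * A) * (X * (Aᴴ * E))) := by
              rw [hDE, Matrix.one_mul]; simp only [Matrix.mul_assoc]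
          _ = 0 := by rw [hQA, Matrix.zero_mul, Matrix.mul_zero]
      rw [hzero, Matrix.trace_zero]
  constructor
  · -- InjOn
    rintro X ⟨hX, -⟩ Y ⟨hY, -⟩ hXY
    simp only [hDinv] at hXY
    have hW : A * X * Aᴴ = A * Y * Aᴴ := by
      rw [← hDED (A * X * Aᴴ), ← hDED (A * Y * Aᴴ), hXY]
    calc X = Ad * (A * X * Aᴴ) * Adᴴ := (hrec X).symm
      _ = Ad * (A * Y * Aᴴ) * Adᴴ := by rw [hW]
      _ = Y := hrec Y
  · -- SurjOn
    rintro U ⟨hU, hdiag, htr⟩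
    have hQH : (1 - A * Ad)ᴴ = 1 - A * Ad := by
      rw [Matrix.conjTranspose_sub, Matrix.conjTranspose_one, hP3]
    have hQQ : (1 - A * Ad) * (1 - A * Ad) = 1 - A * Ad := by
      rw [Matrix.sub_mul, Matrix.one_mul, Matrix.mul_sub, Matrix.mul_one,
        ← Matrix.mul_assoc, hP1]
      abel
    have hQpsd : (1 - A * Ad).PosSemidef := by
      have : (1 - A * Ad)ᴴ * (1 - A * Ad) = 1 - A * Ad := by rw [hQH, hQQ]
      rw [← this]; exact Matrix.posSemidef_conjTranspose_mul_self _
    have hPpsd : (D * (1 - A * Ad) * D).PosSemidef := by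
      have := hQpsd.mul_mul_conjTranspose_same D
      rwa [hDH] at this
    have hPU : D * (1 - A * Ad) * D * U = 0 := aux_psd_trace_mul hPpsd hU htr
    have hkey : A * (Ad * (D * U)) = D * U := by
      have h0 : E * (D * ((1 - A * Ad) * (D * U))) = 0 := by
        rw [show D * ((1 - A * Ad) * (D * U)) = D * (1 - A * Ad) * D * U by
          simp only [Matrix.mul_assoc], hPU, Matrix.mul_zero]
      rw [← Matrix.mul_assoc, hED, Matrix.one_mul, Matrix.sub_mul, Matrix.one_mul,
        sub_eq_zero] at h0
      rw [Matrix.mul_assoc] at h0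
      exact h0.symm
    have hAdAH : Adᴴ * Aᴴ = A * Ad := by rw [← Matrix.conjTranspose_mul, hP3]
    have hkey2 : U * (D * (A * Ad)) = U * D := by
      have h1 := congrArg Matrix.conjTranspose hkey
      simp only [Matrix.conjTranspose_mul, hDH, hU.1.eq] at h1
      simp only [Matrix.mul_assoc] at h1
      rwa [hAdAH] at h1
    set X : Matrix (Fin p) (Fin p) ℂ := Ad * D * U * D * Adᴴ with hXdef
    have hAXA : A * X * Aᴴ = D * U * D := by
      calc A * X * Aᴴ = A * (Ad * (D * U)) * (D * (Adᴴ * Aᴴ)) := by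
            rw [hXdef]; simp only [Matrix.mul_assoc]
        _ = D * U * (D * (A * Ad)) := by rw [hkey, hAdAH]
        _ = D * (U * (D * (A * Ad))) := by simp only [Matrix.mul_assoc]
        _ = D * (U * D) := by rw [hkey2]
        _ = D * U * D := by simp only [Matrix.mul_assoc]
    refine ⟨X, ⟨?_, ?_⟩, ?_⟩
    · -- X is PSD
      have heq : X = (Ad * D) * U * (Ad * D)ᴴ := by
        rw [hXdef, Matrix.conjTranspose_mul, hDH]; simp only [Matrix.mul_assoc]
      rw [heq]; exact hU.mul_mul_conjTranspose_same (Ad * D)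
    · intro i
      rw [aux_trace_vecMulVec A X i, hAXA, hDWD, hdiag i, mul_one]
      exact (pow_two _).symm
    · show D⁻¹ * (A * X * Aᴴ) * D⁻¹ = U
      rw [hDinv, hAXA, hEDE]
end

section
/- Let A ∈ ℂ^{n×p}, x₀ ∈ ℂ^p, C > 0, and set D = 2C + 2√2 + 1. Let b_noise ∈ ℝⁿ with ‖b_noise‖₂ ≤ ‖Ax₀‖₂, set b = |Ax₀| + b_noise, and let V be a minimizer of d₁(V, F) over {V ∈ H_n : V ⪰ 0, diag(V) = b²}. Let P = AA† be the orthogonal projector onto the range of A and V∥ = PVP. If ‖V − (Ax₀)(Ax₀)*‖₂ > D‖Ax₀‖₂‖b_noise‖₂, then ‖V∥ − (Ax₀)(Ax₀)*‖₂ > 2C‖Ax₀‖₂‖b_noise‖₂. -/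
open Matrix ComplexOrder

/-- The Frobenius norm of a complex matrix. -/
noncomputable def frobNorm {n : ℕ} (M : Matrix (Fin n) (Fin n) ℂ) : ℝ :=
  Real.sqrt (∑ i, ∑ j, ‖M i j‖ ^ 2)

/-- The Euclidean norm of a complex vector. -/
noncomputable def cvecNorm {n : ℕ} (v : Fin n → ℂ) : ℝ :=
  Real.sqrt (∑ i, ‖v i‖ ^ 2)

/-- The Euclidean norm of a real vector. -/
noncomputable def rvecNorm {n : ℕ} (v : Fin n → ℝ) : ℝ :=
  Real.sqrt (∑ i, (v i) ^ 2)

/-- `F = {V ∈ H_n : (I − AA†)V(I − AA†) = 0}`. -/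
def Fset {n p : ℕ} (A : Matrix (Fin n) (Fin p) ℂ) (Ad : Matrix (Fin p) (Fin n) ℂ) :
    Set (Matrix (Fin n) (Fin n) ℂ) :=
  {V | V.IsHermitian ∧ (1 - A * Ad) * V * (1 - A * Ad) = 0}

/-- Trace-norm distance from `V` to `F`. -/
noncomputable def d1F {n p : ℕ} (A : Matrix (Fin n) (Fin p) ℂ)
    (Ad : Matrix (Fin p) (Fin n) ℂ) (V : Matrix (Fin n) (Fin n) ℂ) : ℝ :=
  sInf {r : ℝ | ∃ W ∈ Fset A Ad, r = traceNorm (V - W)}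

namespace PCaux

variable {n : ℕ}

/-! ### Euclidean space embeddings -/

noncomputable def em (M : Matrix (Fin n) (Fin n) ℂ) : EuclideanSpace ℂ (Fin n × Fin n) :=
  (WithLp.equiv 2 _).symm (fun ij => M ij.1 ij.2)

lemma em_add (M N : Matrix (Fin n) (Fin n) ℂ) : em (M + N) = em M + em N := rfl

lemma frob_eq_norm_em (M : Matrix (Fin n) (Fin n) ℂ) : frobNorm M = ‖em M‖ := by
  rw [EuclideanSpace.norm_eq, frobNorm]
  congr 1
  rw [Fintype.sum_prod_type]
  rfl

lemma inner_em (M N : Matrix (Fin n) (Fin n) ℂ) :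
    (inner ℂ (em M) (em N)) = (Mᴴ * N).trace := by
  simp only [PiLp.inner_apply, RCLike.inner_apply, em, WithLp.equiv_symm_apply, PiLp.toLp_apply,
    Matrix.trace, Matrix.diag, Matrix.mul_apply, Matrix.conjTranspose_apply]
  rw [Fintype.sum_prod_type]
  rw [Finset.sum_comm]
  exact Finset.sum_congr rfl fun _ _ => Finset.sum_congr rfl fun _ _ => mul_comm _ _

lemma frobNorm_nonneg (M : Matrix (Fin n) (Fin n) ℂ) : 0 ≤ frobNorm M :=
  Real.sqrt_nonneg _

lemma frob_sq (M : Matrix (Fin n) (Fin n) ℂ) :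
    frobNorm M ^ 2 = ((Mᴴ * M).trace).re := by
  rw [frob_eq_norm_em, ← inner_em M M]
  rw [← inner_self_eq_norm_sq (𝕜 := ℂ) (em M)]
  rfl

lemma frob_add_le (M N : Matrix (Fin n) (Fin n) ℂ) :
    frobNorm (M + N) ≤ frobNorm M + frobNorm N := by
  rw [frob_eq_norm_em, frob_eq_norm_em, frob_eq_norm_em, em_add]
  exact norm_add_le _ _

lemma frob_pythagoras {M N : Matrix (Fin n) (Fin n) ℂ} (h : (Mᴴ * N).trace = 0) :
    frobNorm (M + N) ^ 2 = frobNorm M ^ 2 + frobNorm N ^ 2 := by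
  rw [frob_eq_norm_em, frob_eq_norm_em, frob_eq_norm_em, em_add]
  rw [@norm_add_sq ℂ _ _ _ _ (em M) (em N)]
  rw [show (inner ℂ (em M) (em N)) = 0 by rw [inner_em, h]]
  simp

lemma frob_conjTranspose (M : Matrix (Fin n) (Fin n) ℂ) : frobNorm Mᴴ = frobNorm M := by
  rw [frobNorm, frobNorm, Finset.sum_comm]
  congr 1
  apply Finset.sum_congr rfl; intro i _
  apply Finset.sum_congr rfl; intro j _
  rw [Matrix.conjTranspose_apply]
  simp

lemma frob_sq_sum (M : Matrix (Fin n) (Fin n) ℂ) :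
    frobNorm M ^ 2 = ∑ i, ∑ j, ‖M i j‖ ^ 2 := by
  rw [frobNorm, Real.sq_sqrt]; positivity

set_option maxHeartbeats 1000000 in
lemma frob_mul_le (M N : Matrix (Fin n) (Fin n) ℂ) :
    frobNorm (M * N) ≤ frobNorm M * frobNorm N := by
  have hM2 : frobNorm M ^ 2 = ∑ i, ∑ k, ‖M i k‖ ^ 2 := frob_sq_sum M
  have hN2 : frobNorm N ^ 2 = ∑ j, ∑ k, ‖N k j‖ ^ 2 := by
    rw [frob_sq_sum N, Finset.sum_comm]
  have key : ∑ i, ∑ j, ‖(M * N) i j‖ ^ 2 ≤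
      (frobNorm M ^ 2) * (frobNorm N ^ 2) := by
    rw [hM2, hN2, Finset.sum_mul_sum]
    apply Finset.sum_le_sum
    intro i _
    apply Finset.sum_le_sum
    intro j _
    have h1 : ‖(M * N) i j‖ ≤ ∑ k, ‖M i k‖ * ‖N k j‖ := by
      rw [Matrix.mul_apply]
      refine (norm_sum_le _ _).trans ?_
      apply le_of_eq
      apply Finset.sum_congr rfl
      intro k _
      exact norm_mul _ _
    calc ‖(M * N) i j‖ ^ 2
        ≤ (∑ k, ‖M i k‖ * ‖N k j‖) ^ 2 := by
          apply pow_le_pow_left₀ (norm_nonneg _) h1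
      _ ≤ (∑ k, ‖M i k‖ ^ 2) * (∑ k, ‖N k j‖ ^ 2) :=
          Finset.sum_mul_sq_le_sq_mul_sq _ _ _
  calc frobNorm (M * N) = Real.sqrt (∑ i, ∑ j, ‖(M * N) i j‖ ^ 2) := rfl
    _ ≤ Real.sqrt ((frobNorm M ^ 2) * (frobNorm N ^ 2)) := Real.sqrt_le_sqrt key
    _ = frobNorm M * frobNorm N := by
        rw [Real.sqrt_mul (by positivity), Real.sqrt_sq (frobNorm_nonneg M),
          Real.sqrt_sq (frobNorm_nonneg N)]

lemma sqrt_sum_le (f : Fin n → ℝ) (hf : ∀ i, 0 ≤ f i) :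
    Real.sqrt (∑ i, f i) ≤ ∑ i, Real.sqrt (f i) := by
  have h1 : ∑ i, f i ≤ (∑ i, Real.sqrt (f i)) ^ 2 := by
    rw [pow_two, Finset.sum_mul]
    apply Finset.sum_le_sum
    intro i _
    calc f i = Real.sqrt (f i) * Real.sqrt (f i) := (Real.mul_self_sqrt (hf i)).symm
      _ ≤ Real.sqrt (f i) * ∑ j, Real.sqrt (f j) := by
          apply mul_le_mul_of_nonneg_left ?_ (Real.sqrt_nonneg _)
          exact Finset.single_le_sum (fun j _ => Real.sqrt_nonneg _) (Finset.mem_univ i)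
  calc Real.sqrt (∑ i, f i) ≤ Real.sqrt ((∑ i, Real.sqrt (f i)) ^ 2) := Real.sqrt_le_sqrt h1
    _ = _ := Real.sqrt_sq (Finset.sum_nonneg fun j _ => Real.sqrt_nonneg _)





lemma traceNorm_nonneg (M : Matrix (Fin n) (Fin n) ℂ) : 0 ≤ traceNorm M :=
  Finset.sum_nonneg fun _ _ => Real.sqrt_nonneg _

lemma trace_unitary_conj (U : Matrix.unitaryGroup (Fin n) ℂ) (D : Matrix (Fin n) (Fin n) ℂ) :
    ((U : Matrix (Fin n) (Fin n) ℂ) * D * (star U : Matrix (Fin n) (Fin n) ℂ)).trace = D.trace := by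
  rw [Matrix.trace_mul_cycle]
  rw [show ((star U : Matrix (Fin n) (Fin n) ℂ) * (U : Matrix (Fin n) (Fin n) ℂ)) = 1 from
    Unitary.coe_star_mul_self U]
  rw [one_mul]

noncomputable def psqrt {A : Matrix (Fin n) (Fin n) ℂ} (hA : A.PosSemidef) :
    Matrix (Fin n) (Fin n) ℂ :=
  (hA.1.eigenvectorUnitary : Matrix (Fin n) (Fin n) ℂ) *
    Matrix.diagonal (fun i => ((Real.sqrt (hA.1.eigenvalues i) : ℝ) : ℂ)) *
    (star hA.1.eigenvectorUnitary : Matrix (Fin n) (Fin n) ℂ)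

open scoped MatrixOrder in
lemma psqrt_eq_cfc {A : Matrix (Fin n) (Fin n) ℂ} (hA : A.PosSemidef) :
    psqrt hA = CFC.sqrt A := by
  rw [CFC.sqrt_eq_cfc, cfc_nnreal_eq_real _ A hA.nonneg, hA.1.cfc_eq, Matrix.IsHermitian.cfc,
    Unitary.conjStarAlgAut_apply, psqrt]
  congr 2
  ext i j
  simp [Matrix.diagonal_apply, max_eq_left (hA.eigenvalues_nonneg i)]

open scoped MatrixOrder in
lemma posSemidef_psqrt {A : Matrix (Fin n) (Fin n) ℂ} (hA : A.PosSemidef) :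
    (psqrt hA).PosSemidef := by
  rw [psqrt_eq_cfc]; exact (CFC.sqrt_nonneg A).posSemidef

open scoped MatrixOrder in
lemma psqrt_mul_self {A : Matrix (Fin n) (Fin n) ℂ} (hA : A.PosSemidef) :
    psqrt hA * psqrt hA = A := by
  rw [psqrt_eq_cfc]; exact CFC.sqrt_mul_sqrt_self A hA.nonneg

open scoped MatrixOrder in
lemma eq_psqrt_of_sq_eq {B A : Matrix (Fin n) (Fin n) ℂ} (hB : B.PosSemidef)
    (hA : A.PosSemidef) (h : B ^ 2 = A) : B = psqrt hA := by
  rw [psqrt_eq_cfc]; exact (CFC.sqrt_unique (by rw [← sq, h]) hB.nonneg).symm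

lemma traceNorm_eq_re_trace_sqrt (M : Matrix (Fin n) (Fin n) ℂ) :
    traceNorm M = ((psqrt (Matrix.posSemidef_conjTranspose_mul_self M)).trace).re := by
  rw [psqrt, trace_unitary_conj, Matrix.trace_diagonal]
  rw [traceNorm]
  rw [Complex.re_sum]
  simp

lemma traceNorm_psd {N : Matrix (Fin n) (Fin n) ℂ} (hN : N.PosSemidef) :
    traceNorm N = N.trace.re := by
  have h1 : N = psqrt (Matrix.posSemidef_conjTranspose_mul_self N) :=
    eq_psqrt_of_sq_eq hN _ (by rw [pow_two, hN.1])
  rw [traceNorm_eq_re_trace_sqrt, ← h1]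

lemma conj_diag_mul (U : Matrix.unitaryGroup (Fin n) ℂ) (d e : Fin n → ℂ) :
    ((U : Matrix (Fin n) (Fin n) ℂ) * Matrix.diagonal d * (star U : Matrix (Fin n) (Fin n) ℂ)) *
      ((U : Matrix (Fin n) (Fin n) ℂ) * Matrix.diagonal e * (star U : Matrix (Fin n) (Fin n) ℂ))
    = (U : Matrix (Fin n) (Fin n) ℂ) * Matrix.diagonal (d * e) *
        (star U : Matrix (Fin n) (Fin n) ℂ) := by
  have h : ((star U : Matrix (Fin n) (Fin n) ℂ) * (U : Matrix (Fin n) (Fin n) ℂ)) = 1 :=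
    Unitary.coe_star_mul_self U
  calc ((U : Matrix (Fin n) (Fin n) ℂ) * Matrix.diagonal d * (star U : Matrix (Fin n) (Fin n) ℂ)) *
      ((U : Matrix (Fin n) (Fin n) ℂ) * Matrix.diagonal e * (star U : Matrix (Fin n) (Fin n) ℂ))
      = (U : Matrix (Fin n) (Fin n) ℂ) * (Matrix.diagonal d *
          (((star U : Matrix (Fin n) (Fin n) ℂ)) * (U : Matrix (Fin n) (Fin n) ℂ)) *
          Matrix.diagonal e) * (star U : Matrix (Fin n) (Fin n) ℂ) := by
        simp only [Matrix.mul_assoc]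
    _ = _ := by rw [h, mul_one, Matrix.diagonal_mul_diagonal]; rfl

lemma traceNorm_hermitian {M : Matrix (Fin n) (Fin n) ℂ} (hM : M.IsHermitian) :
    traceNorm M = ∑ i, |hM.eigenvalues i| := by
  set U := hM.eigenvectorUnitary with hU
  set lam := hM.eigenvalues with hlam
  set R := (U : Matrix (Fin n) (Fin n) ℂ) *
      Matrix.diagonal (fun i => ((|lam i| : ℝ) : ℂ)) * (star U : Matrix (Fin n) (Fin n) ℂ) with hR
  have hRpsd : R.PosSemidef := by
    rw [hR, Matrix.star_eq_conjTranspose (U : Matrix (Fin n) (Fin n) ℂ)]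
    exact Matrix.PosSemidef.mul_mul_conjTranspose_same
      (Matrix.posSemidef_diagonal_iff.mpr fun i => by
        rw [Complex.zero_le_real]; exact abs_nonneg _) _
  have hspec : M = (U : Matrix (Fin n) (Fin n) ℂ) *
      Matrix.diagonal (RCLike.ofReal ∘ lam) * (star U : Matrix (Fin n) (Fin n) ℂ) := by
    have := hM.spectral_theorem; rwa [Unitary.conjStarAlgAut_apply] at this
  have hsq : R ^ 2 = Mᴴ * M :=
    calc R ^ 2 = (U : Matrix (Fin n) (Fin n) ℂ) *
        Matrix.diagonal ((fun i => ((|lam i| : ℝ) : ℂ)) * (fun i => ((|lam i| : ℝ) : ℂ))) *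
        (star U : Matrix (Fin n) (Fin n) ℂ) := by rw [pow_two, hR, conj_diag_mul]
    _ = (U : Matrix (Fin n) (Fin n) ℂ) *
        Matrix.diagonal ((RCLike.ofReal ∘ lam) * (RCLike.ofReal ∘ lam)) *
        (star U : Matrix (Fin n) (Fin n) ℂ) := by
          have hde : (fun i => ((|lam i| : ℝ) : ℂ)) * (fun i => ((|lam i| : ℝ) : ℂ))
              = (RCLike.ofReal ∘ lam) * (RCLike.ofReal ∘ lam) := by
            funext i
            show ((|lam i| : ℝ) : ℂ) * ((|lam i| : ℝ) : ℂ)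
              = RCLike.ofReal (lam i) * RCLike.ofReal (lam i)
            rw [show ((RCLike.ofReal (lam i)) : ℂ) = ((lam i : ℝ) : ℂ) from rfl]
            rw [← Complex.ofReal_mul, ← Complex.ofReal_mul, abs_mul_abs_self]
          rw [hde]
    _ = ((U : Matrix (Fin n) (Fin n) ℂ) * Matrix.diagonal (RCLike.ofReal ∘ lam) *
          (star U : Matrix (Fin n) (Fin n) ℂ)) *
        ((U : Matrix (Fin n) (Fin n) ℂ) * Matrix.diagonal (RCLike.ofReal ∘ lam) *
          (star U : Matrix (Fin n) (Fin n) ℂ)) := (conj_diag_mul U _ _).symm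
    _ = Mᴴ * M := by rw [← hspec, hM]
  have hRs : R = psqrt (Matrix.posSemidef_conjTranspose_mul_self M) :=
    eq_psqrt_of_sq_eq hRpsd _ hsq
  rw [traceNorm_eq_re_trace_sqrt, ← hRs, hR, trace_unitary_conj, Matrix.trace_diagonal]
  rw [Complex.re_sum]
  simp




lemma re_diag_BHB_nonneg (B : Matrix (Fin n) (Fin n) ℂ) (i : Fin n) :
    0 ≤ ((Bᴴ * B) i i).re := by
  simp only [Matrix.mul_apply, Matrix.conjTranspose_apply, Complex.re_sum]
  apply Finset.sum_nonneg
  intro k _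
  rw [show (star (B k i) * B k i) = (starRingEnd ℂ) (B k i) * B k i from rfl]
  rw [mul_comm, Complex.mul_conj]
  simp [Complex.normSq_nonneg]

lemma trace_mul_diagonal (G : Matrix (Fin n) (Fin n) ℂ) (d : Fin n → ℂ) :
    (G * Matrix.diagonal d).trace = ∑ i, G i i * d i := by
  rw [Matrix.trace]
  exact Finset.sum_congr rfl fun i _ => by rw [Matrix.diag_apply, Matrix.mul_diagonal]

lemma re_trace_conj_proj_le (U : Matrix.unitaryGroup (Fin n) ℂ) (d : Fin n → ℝ)
    {Qm : Matrix (Fin n) (Fin n) ℂ} (hQH : Qmᴴ = Qm) (hQ2 : Qm * Qm = Qm) :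
    ((((U : Matrix (Fin n) (Fin n) ℂ) * Matrix.diagonal (fun i => ((d i : ℝ) : ℂ)) *
      (star U : Matrix (Fin n) (Fin n) ℂ)) * Qm).trace).re ≤ ∑ i, |d i| := by
  set G := (star U : Matrix (Fin n) (Fin n) ℂ) * Qm * (U : Matrix (Fin n) (Fin n) ℂ) with hG
  have key : ∀ R : Matrix (Fin n) (Fin n) ℂ, Rᴴ = R → R * R = R → ∀ i,
      0 ≤ (((star U : Matrix (Fin n) (Fin n) ℂ) * R * (U : Matrix (Fin n) (Fin n) ℂ)) i i).re := by
    intro R hRH hR2 i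
    have hct : (R * (U : Matrix (Fin n) (Fin n) ℂ))ᴴ
        = (star U : Matrix (Fin n) (Fin n) ℂ) * R := by
      rw [Matrix.conjTranspose_mul, hRH, ← Matrix.star_eq_conjTranspose]
    have hGL : (star U : Matrix (Fin n) (Fin n) ℂ) * R * (U : Matrix (Fin n) (Fin n) ℂ)
        = (R * (U : Matrix (Fin n) (Fin n) ℂ))ᴴ * (R * (U : Matrix (Fin n) (Fin n) ℂ)) :=
      calc (star U : Matrix (Fin n) (Fin n) ℂ) * R * (U : Matrix (Fin n) (Fin n) ℂ)
          = (star U : Matrix (Fin n) (Fin n) ℂ) * (R * R) * (U : Matrix (Fin n) (Fin n) ℂ) := by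
            rw [hR2]
      _ = ((star U : Matrix (Fin n) (Fin n) ℂ) * R) * (R * (U : Matrix (Fin n) (Fin n) ℂ)) := by
            simp only [Matrix.mul_assoc]
      _ = (R * (U : Matrix (Fin n) (Fin n) ℂ))ᴴ * (R * (U : Matrix (Fin n) (Fin n) ℂ)) := by
            rw [hct]
    rw [hGL]
    exact re_diag_BHB_nonneg _ i
  have hG0 : ∀ i, 0 ≤ (G i i).re := key Qm hQH hQ2
  have hG1 : ∀ i, (G i i).re ≤ 1 := by
    intro i
    have h1 : (star U : Matrix (Fin n) (Fin n) ℂ) * (1 - Qm) * (U : Matrix (Fin n) (Fin n) ℂ)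
        = 1 - G := by
      rw [Matrix.mul_sub, Matrix.mul_one, Matrix.sub_mul, hG]
      rw [show ((star U : Matrix (Fin n) (Fin n) ℂ) * (U : Matrix (Fin n) (Fin n) ℂ)) = 1 from
        Unitary.coe_star_mul_self U]
    have h2 := key (1 - Qm)
      (by rw [Matrix.conjTranspose_sub, Matrix.conjTranspose_one, hQH])
      (by rw [Matrix.mul_sub, Matrix.mul_one, Matrix.sub_mul, Matrix.one_mul, hQ2]; simp) i
    rw [h1, Matrix.sub_apply, Matrix.one_apply_eq] at h2
    have : (0 : ℝ) ≤ 1 - (G i i).re := by simpa using h2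
    linarith
  have htr : ((((U : Matrix (Fin n) (Fin n) ℂ) * Matrix.diagonal (fun i => ((d i : ℝ) : ℂ)) *
      (star U : Matrix (Fin n) (Fin n) ℂ)) * Qm)).trace = ∑ i, G i i * ((d i : ℝ) : ℂ) := by
    have e1 : (((U : Matrix (Fin n) (Fin n) ℂ) * Matrix.diagonal (fun i => ((d i : ℝ) : ℂ)) *
        (star U : Matrix (Fin n) (Fin n) ℂ)) * Qm) = (U : Matrix (Fin n) (Fin n) ℂ) *
        (Matrix.diagonal (fun i => ((d i : ℝ) : ℂ)) *
          ((star U : Matrix (Fin n) (Fin n) ℂ) * Qm)) := by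
      simp only [Matrix.mul_assoc]
    have e2 : (Matrix.diagonal (fun i => ((d i : ℝ) : ℂ)) *
        ((star U : Matrix (Fin n) (Fin n) ℂ) * Qm)) * (U : Matrix (Fin n) (Fin n) ℂ)
        = Matrix.diagonal (fun i => ((d i : ℝ) : ℂ)) * G := by
      rw [hG]; simp only [Matrix.mul_assoc]
    rw [e1, Matrix.trace_mul_comm, e2, Matrix.trace_mul_comm, trace_mul_diagonal]
  rw [htr, Complex.re_sum]
  apply Finset.sum_le_sum
  intro i _
  have hre : (G i i * ((d i : ℝ) : ℂ)).re = (G i i).re * d i := by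
    simp [Complex.mul_re]
  rw [hre]
  calc (G i i).re * d i ≤ (G i i).re * |d i| :=
        mul_le_mul_of_nonneg_left (le_abs_self _) (hG0 i)
  _ ≤ 1 * |d i| := mul_le_mul_of_nonneg_right (hG1 i) (abs_nonneg _)
  _ = |d i| := one_mul _

lemma re_trace_mul_proj_le {M Qm : Matrix (Fin n) (Fin n) ℂ} (hM : M.IsHermitian)
    (hQH : Qmᴴ = Qm) (hQ2 : Qm * Qm = Qm) : ((M * Qm).trace).re ≤ traceNorm M := by
  rw [traceNorm_hermitian hM]
  have h := re_trace_conj_proj_le hM.eigenvectorUnitary hM.eigenvalues hQH hQ2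
  have e : M = (hM.eigenvectorUnitary : Matrix (Fin n) (Fin n) ℂ) *
      Matrix.diagonal (fun i => ((hM.eigenvalues i : ℝ) : ℂ)) *
      (star hM.eigenvectorUnitary : Matrix (Fin n) (Fin n) ℂ) := by
    have := hM.spectral_theorem; rwa [Unitary.conjStarAlgAut_apply] at this
  rw [← e] at h
  exact h


lemma trace_eq_sum_eigenvalues {H : Matrix (Fin n) (Fin n) ℂ} (hH : H.IsHermitian) :
    H.trace = ∑ i, ((hH.eigenvalues i : ℝ) : ℂ) := by
  conv_lhs => rw [hH.spectral_theorem, Unitary.conjStarAlgAut_apply]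
  rw [trace_unitary_conj, Matrix.trace_diagonal]
  rfl

lemma frob_le_traceNorm (M : Matrix (Fin n) (Fin n) ℂ) : frobNorm M ≤ traceNorm M := by
  have hK := Matrix.posSemidef_conjTranspose_mul_self M
  have h1 : ((Mᴴ * M).trace).re = ∑ i, hK.1.eigenvalues i := by
    rw [trace_eq_sum_eigenvalues hK.1, Complex.re_sum]
    simp
  have h2 : frobNorm M = Real.sqrt (∑ i, hK.1.eigenvalues i) := by
    rw [← h1, ← frob_sq M, Real.sqrt_sq (frobNorm_nonneg M)]
  rw [h2, traceNorm]
  exact sqrt_sum_le _ fun i => hK.eigenvalues_nonneg i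

variable {p : ℕ} {A : Matrix (Fin n) (Fin p) ℂ} {Ad : Matrix (Fin p) (Fin n) ℂ}

lemma herm_compress {Qm V' : Matrix (Fin n) (Fin n) ℂ} (hQH : Qmᴴ = Qm)
    (hV' : V'.IsHermitian) : (Qm * V' * Qm).IsHermitian := by
  have : (Qm * V' * Qm)ᴴ = Qm * V' * Qm := by
    rw [Matrix.conjTranspose_mul, Matrix.conjTranspose_mul, hQH,
      show V'ᴴ = V' from hV']
    simp only [Matrix.mul_assoc]
  exact this

lemma compress_vanish {Qm V' : Matrix (Fin n) (Fin n) ℂ} (hQ2 : Qm * Qm = Qm) :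
    Qm * (V' - Qm * V' * Qm) * Qm = 0 := by
  rw [Matrix.mul_sub, Matrix.sub_mul]
  have e : Qm * (Qm * V' * Qm) * Qm = Qm * V' * Qm := by
    simp only [Matrix.mul_assoc]
    rw [hQ2, ← Matrix.mul_assoc Qm Qm, hQ2]
  rw [e]
  simp

lemma trace_compress {Qm W : Matrix (Fin n) (Fin n) ℂ} (hQ2 : Qm * Qm = Qm) :
    (Qm * W * Qm).trace = (W * Qm).trace := by
  rw [Matrix.trace_mul_cycle, hQ2, Matrix.trace_mul_comm]

lemma d1F_le_QVQ {V' : Matrix (Fin n) (Fin n) ℂ} (hV' : V'.IsHermitian)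
    (hQH : (1 - A * Ad)ᴴ = 1 - A * Ad)
    (hQ2 : (1 - A * Ad) * (1 - A * Ad) = 1 - A * Ad) :
    d1F A Ad V' ≤ traceNorm ((1 - A * Ad) * V' * (1 - A * Ad)) := by
  apply csInf_le
  · exact ⟨0, fun r ⟨W, hW, hr⟩ => hr ▸ traceNorm_nonneg _⟩
  · exact ⟨V' - (1 - A * Ad) * V' * (1 - A * Ad),
      ⟨hV'.sub (herm_compress hQH hV'), compress_vanish hQ2⟩,
      by rw [sub_sub_cancel]⟩

lemma d1F_ge {V : Matrix (Fin n) (Fin n) ℂ} (hV : V.IsHermitian)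
    (hQH : (1 - A * Ad)ᴴ = 1 - A * Ad)
    (hQ2 : (1 - A * Ad) * (1 - A * Ad) = 1 - A * Ad) :
    (((1 - A * Ad) * V * (1 - A * Ad)).trace).re ≤ d1F A Ad V := by
  have htr : ∀ W : Matrix (Fin n) (Fin n) ℂ,
      ((1 - A * Ad) * W * (1 - A * Ad)).trace = (W * (1 - A * Ad)).trace :=
    fun W => trace_compress hQ2
  apply le_csInf
  · exact ⟨traceNorm (V - 0), 0, ⟨Matrix.isHermitian_zero, by simp⟩, rfl⟩
  · rintro r ⟨W, ⟨hWH, hWF⟩, rfl⟩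
    have h0 : (W * (1 - A * Ad)).trace = 0 := by rw [← htr W, hWF, Matrix.trace_zero]
    have h1 : ((1 - A * Ad) * V * (1 - A * Ad)).trace = ((V - W) * (1 - A * Ad)).trace := by
      rw [htr V, Matrix.sub_mul, Matrix.trace_sub, h0, sub_zero]
    rw [h1]
    exact re_trace_mul_proj_le (hV.sub hWH) hQH hQ2

noncomputable def ec (v : Fin n → ℂ) : EuclideanSpace ℂ (Fin n) :=
  (WithLp.equiv 2 _).symm v

lemma cvec_eq_norm_ec (v : Fin n → ℂ) : cvecNorm v = ‖ec v‖ := by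
  rw [EuclideanSpace.norm_eq, cvecNorm]
  rfl

lemma cvec_nonneg (v : Fin n → ℂ) : 0 ≤ cvecNorm v := Real.sqrt_nonneg _

lemma cvec_contract {Qm : Matrix (Fin n) (Fin n) ℂ} (hQH : Qmᴴ = Qm)
    (hQ2 : Qm * Qm = Qm) (w : Fin n → ℂ) : cvecNorm (Qm *ᵥ w) ≤ cvecNorm w := by
  have e1 : (inner ℂ (ec (Qm *ᵥ w)) (ec (Qm *ᵥ w)))
      = dotProduct (star (Qm *ᵥ w)) (Qm *ᵥ w) :=
    (EuclideanSpace.inner_toLp_toLp _ _).trans (dotProduct_comm _ _)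
  have e2 : (inner ℂ (ec w) (ec (Qm *ᵥ w)))
      = dotProduct (star w) (Qm *ᵥ w) :=
    (EuclideanSpace.inner_toLp_toLp _ _).trans (dotProduct_comm _ _)
  have hsq : (cvecNorm (Qm *ᵥ w)) ^ 2 = RCLike.re (inner ℂ (ec w) (ec (Qm *ᵥ w))) := by
    rw [cvec_eq_norm_ec, ← inner_self_eq_norm_sq (𝕜 := ℂ) (ec (Qm *ᵥ w))]
    congr 1
    rw [e1, e2, Matrix.star_mulVec, hQH, ← dotProduct_mulVec,
      Matrix.mulVec_mulVec, hQ2]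
  have hcs : RCLike.re (inner ℂ (ec w) (ec (Qm *ᵥ w))) ≤ cvecNorm w * cvecNorm (Qm *ᵥ w) := by
    calc RCLike.re (inner ℂ (ec w) (ec (Qm *ᵥ w)))
        ≤ ‖(inner ℂ (ec w) (ec (Qm *ᵥ w)))‖ := RCLike.re_le_norm _
      _ ≤ ‖ec w‖ * ‖ec (Qm *ᵥ w)‖ := norm_inner_le_norm _ _
      _ = cvecNorm w * cvecNorm (Qm *ᵥ w) := by rw [cvec_eq_norm_ec, cvec_eq_norm_ec]
  have h0 := cvec_nonneg (Qm *ᵥ w)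
  have h1 := cvec_nonneg w
  nlinarith [hsq, hcs]

noncomputable def er (v : Fin n → ℝ) : EuclideanSpace ℝ (Fin n) :=
  (WithLp.equiv 2 _).symm v

lemma rvec_eq_norm_er (v : Fin n → ℝ) : rvecNorm v = ‖er v‖ := by
  rw [EuclideanSpace.norm_eq, rvecNorm]
  congr 1
  apply Finset.sum_congr rfl
  intro i _
  rw [Real.norm_eq_abs, sq_abs]
  rfl

lemma rvec_add_le (v w : Fin n → ℝ) :
    rvecNorm (fun i => v i + w i) ≤ rvecNorm v + rvecNorm w := by
  rw [rvec_eq_norm_er, rvec_eq_norm_er, rvec_eq_norm_er]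
  exact norm_add_le (er v) (er w)

lemma vecMulVec_col (z : Fin n → ℂ) :
    Matrix.vecMulVec z (star z) = Matrix.replicateCol (Fin 1) z * (Matrix.replicateCol (Fin 1) z)ᴴ := by
  rw [Matrix.vecMulVec_eq (Fin 1), Matrix.conjTranspose_replicateCol]; rfl

lemma vecMulVec_star_psd (z : Fin n → ℂ) : (Matrix.vecMulVec z (star z)).PosSemidef := by
  rw [vecMulVec_col]
  exact Matrix.posSemidef_self_mul_conjTranspose _

lemma trace_vecMulVec_star (z : Fin n → ℂ) :
    (Matrix.vecMulVec z (star z)).trace = ((∑ i, ‖z i‖ ^ 2 : ℝ) : ℂ) := by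
  have h : ∀ i, (Matrix.vecMulVec z (star z)).diag i = ((‖z i‖ ^ 2 : ℝ) : ℂ) := by
    intro i
    rw [Matrix.diag_apply, Matrix.vecMulVec_apply, Pi.star_apply,
      show star (z i) = (starRingEnd ℂ) (z i) from rfl, Complex.mul_conj,
      Complex.normSq_eq_norm_sq]
  rw [Matrix.trace, Finset.sum_congr rfl (fun i _ => h i)]
  norm_cast

lemma traceNorm_vecMulVec_star (z : Fin n → ℂ) :
    traceNorm (Matrix.vecMulVec z (star z)) = cvecNorm z ^ 2 := by
  rw [traceNorm_psd (vecMulVec_star_psd z), trace_vecMulVec_star, Complex.ofReal_re,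
    cvecNorm, Real.sq_sqrt]
  positivity

lemma compress_vecMulVec {Qm : Matrix (Fin n) (Fin n) ℂ} (hQH : Qmᴴ = Qm) (z : Fin n → ℂ) :
    Qm * Matrix.vecMulVec z (star z) * Qm
      = Matrix.vecMulVec (Qm *ᵥ z) (star (Qm *ᵥ z)) := by
  rw [Matrix.vecMulVec_eq (Fin 1), Matrix.vecMulVec_eq (Fin 1), Matrix.star_mulVec, hQH,
    Matrix.replicateCol_mulVec, Matrix.replicateRow_vecMul]
  simp only [Matrix.mul_assoc]

end PCaux



set_option maxHeartbeats 4000000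

open PCaux

/-- Let `b = |Ax₀| + b_noise` with `‖b_noise‖₂ ≤ ‖Ax₀‖₂`, let `V`
minimize `d₁(·, F)` over `{V ⪰ 0 : diag(V) = b²}`, and let `V∥ = PVP` with `P = AA†`.
If `‖V − (Ax₀)(Ax₀)*‖₂ > D‖Ax₀‖₂‖b_noise‖₂` with `D = 2C + 2√2 + 1`, then
`‖V∥ − (Ax₀)(Ax₀)*‖₂ > 2C‖Ax₀‖₂‖b_noise‖₂`. -/
theorem ecart_V_PC {n p : ℕ}
    (A : Matrix (Fin n) (Fin p) ℂ) (Ad : Matrix (Fin p) (Fin n) ℂ)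
    (hPenrose : A * Ad * A = A ∧ Ad * A * Ad = Ad ∧
      (A * Ad)ᴴ = A * Ad ∧ (Ad * A)ᴴ = Ad * A)
    (x₀ : Fin p → ℂ) (C : ℝ) (hC : 0 < C)
    (bnoise : Fin n → ℝ)
    (hbn : rvecNorm bnoise ≤ cvecNorm (A.mulVec x₀))
    (b : Fin n → ℝ) (hb : b = fun i => ‖A.mulVec x₀ i‖ + bnoise i)
    (V : Matrix (Fin n) (Fin n) ℂ)
    (hVpsd : V.PosSemidef) (hVdiag : ∀ i, V i i = ((b i : ℂ)) ^ 2)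
    (hVmin : ∀ V' : Matrix (Fin n) (Fin n) ℂ, V'.PosSemidef →
      (∀ i, V' i i = ((b i : ℂ)) ^ 2) → d1F A Ad V ≤ d1F A Ad V')
    (hfar : frobNorm (V - Matrix.vecMulVec (A.mulVec x₀) (star (A.mulVec x₀))) >
      (2 * C + 2 * Real.sqrt 2 + 1) * cvecNorm (A.mulVec x₀) * rvecNorm bnoise) :
    frobNorm ((A * Ad) * V * (A * Ad) -
        Matrix.vecMulVec (A.mulVec x₀) (star (A.mulVec x₀))) >
      2 * C * cvecNorm (A.mulVec x₀) * rvecNorm bnoise := by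
  classical
  set x : Fin n → ℂ := A.mulVec x₀ with hx
  set X : Matrix (Fin n) (Fin n) ℂ := Matrix.vecMulVec x (star x) with hX
  set ε := rvecNorm bnoise with hεdef
  set nx := cvecNorm x with hnxdef
  have hε0 : 0 ≤ ε := Real.sqrt_nonneg _
  have hnx0 : 0 ≤ nx := Real.sqrt_nonneg _
  have hVH : V.IsHermitian := hVpsd.1
  -- projector facts
  have hPH : (A * Ad)ᴴ = A * Ad := hPenrose.2.2.1
  have hQH : (1 - A * Ad)ᴴ = 1 - A * Ad := by
    rw [Matrix.conjTranspose_sub, Matrix.conjTranspose_one, hPH]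
  have hPP : (A * Ad) * (A * Ad) = A * Ad := by
    rw [← Matrix.mul_assoc, hPenrose.1]
  have hQ2 : (1 - A * Ad) * (1 - A * Ad) = 1 - A * Ad := by
    rw [Matrix.mul_sub, Matrix.mul_one, Matrix.sub_mul, Matrix.one_mul, hPP]
    simp
  have hPQ : (A * Ad) * (1 - A * Ad) = 0 := by
    rw [Matrix.mul_sub, Matrix.mul_one, hPP, sub_self]
  -- the phase-aligned candidate vector y
  set y : Fin n → ℂ :=
    fun i => (b i : ℂ) * (if x i = 0 then 1 else x i / ‖x i‖) with hy
  have huabs : ∀ i, ‖if x i = 0 then 1 else x i / ‖x i‖‖ = 1 := by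
    intro i
    by_cases h : x i = 0
    · simp [h]
    · rw [if_neg h, norm_div, Complex.norm_real, Real.norm_eq_abs, abs_of_nonneg (norm_nonneg _),
        div_self (norm_ne_zero_iff.mpr h)]
  have hyc : ∀ i, y i * star (y i) = ((b i : ℂ)) ^ 2 := by
    intro i
    set u : ℂ := if x i = 0 then 1 else x i / ‖x i‖ with hu
    have hu1 : u * star (u) = 1 := by
      rw [show star u = (starRingEnd ℂ) u from rfl, Complex.mul_conj, Complex.normSq_eq_norm_sq,
        huabs i]
      norm_num
    have : y i * star (y i) = ((b i : ℂ) * star ((b i : ℂ))) * (u * star u) := by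
      rw [hy]
      simp only [star_mul']
      ring
    rw [this, hu1, mul_one, show star ((b i : ℂ)) = (starRingEnd ℂ) ((b i : ℂ)) from rfl,
      Complex.conj_ofReal, pow_two]
  have hyx : ∀ i, ‖y i - x i‖ = |bnoise i| := by
    intro i
    have hbi : b i = ‖x i‖ + bnoise i := by rw [hb]
    by_cases h : x i = 0
    · have hbi0 : b i = bnoise i := by rw [hbi, h, norm_zero, zero_add]
      simp [hy, h, hbi0, Complex.norm_real]
    · have hxid : ((‖x i‖ : ℝ) : ℂ) * (x i / ‖x i‖) = x i := by
        rw [mul_div_assoc']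
        rw [mul_comm, mul_div_assoc, div_self, mul_one]
        exact_mod_cast Complex.ofReal_ne_zero.mpr (norm_ne_zero_iff.mpr h)
      have habs1 : ‖x i / ‖x i‖‖ = 1 := by
        have := huabs i
        rwa [if_neg h] at this
      have hkey : y i - x i = ((bnoise i : ℝ) : ℂ) * (x i / ‖x i‖) := by
        rw [hy]
        simp only [if_neg h]
        have hcast : ((b i : ℝ) : ℂ)
            = ((‖x i‖ : ℝ) : ℂ) + ((bnoise i : ℝ) : ℂ) := by
          rw [hbi]; push_cast; ring
        rw [hcast, add_mul, hxid]
        ring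
      rw [hkey, norm_mul, Complex.norm_real, Real.norm_eq_abs, habs1, mul_one]
  -- candidate matrix
  have hV2psd : (Matrix.vecMulVec y (star y)).PosSemidef := vecMulVec_star_psd y
  have hV2diag : ∀ i, (Matrix.vecMulVec y (star y)) i i = ((b i : ℂ)) ^ 2 := by
    intro i
    rw [Matrix.vecMulVec_apply, Pi.star_apply, hyc i]
  -- the key scalar t
  set t := (((1 - A * Ad) * V * (1 - A * Ad)).trace).re with ht
  have step1 : t ≤ d1F A Ad V := d1F_ge hVH hQH hQ2
  have step2 : d1F A Ad V ≤ d1F A Ad (Matrix.vecMulVec y (star y)) :=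
    hVmin _ hV2psd hV2diag
  have step3 : d1F A Ad (Matrix.vecMulVec y (star y)) ≤
      traceNorm ((1 - A * Ad) * (Matrix.vecMulVec y (star y)) * (1 - A * Ad)) :=
    d1F_le_QVQ hV2psd.1 hQH hQ2
  have htn : traceNorm ((1 - A * Ad) * (Matrix.vecMulVec y (star y)) * (1 - A * Ad))
      = cvecNorm ((1 - A * Ad) *ᵥ y) ^ 2 := by
    rw [compress_vecMulVec hQH, traceNorm_vecMulVec_star]
  have hQx : (1 - A * Ad) *ᵥ x = 0 := by
    rw [Matrix.sub_mulVec, Matrix.one_mulVec, hx, Matrix.mulVec_mulVec, hPenrose.1, sub_self]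
  have hQy : (1 - A * Ad) *ᵥ y = (1 - A * Ad) *ᵥ (y - x) := by
    rw [Matrix.mulVec_sub, hQx, sub_zero]
  have hyxnorm : cvecNorm (y - x) = ε := by
    rw [cvecNorm, hεdef, rvecNorm]
    congr 1
    apply Finset.sum_congr rfl
    intro i _
    rw [show (y - x) i = y i - x i from rfl, hyx i, sq_abs]
  have hcontract : cvecNorm ((1 - A * Ad) *ᵥ y) ≤ ε := by
    rw [hQy, ← hyxnorm]
    exact cvec_contract hQH hQ2 (y - x)
  have htε : t ≤ ε ^ 2 := by
    have h1 : t ≤ cvecNorm ((1 - A * Ad) *ᵥ y) ^ 2 := by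
      rw [← htn]
      exact step1.trans (step2.trans step3)
    have h2 : cvecNorm ((1 - A * Ad) *ᵥ y) ^ 2 ≤ ε ^ 2 :=
      pow_le_pow_left₀ (cvec_nonneg _) hcontract 2
    linarith
  -- square root of V
  set S := psqrt hVpsd with hS
  have hSH : Sᴴ = S := (posSemidef_psqrt hVpsd).1
  have hSS : S * S = V := psqrt_mul_self hVpsd
  have factor : ∀ R R' : Matrix (Fin n) (Fin n) ℂ, Rᴴ = R → R'ᴴ = R' →
      R * V * R' = (S * R)ᴴ * (S * R') := by
    intro R R' hR hR'
    rw [Matrix.conjTranspose_mul, hSH, hR]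
    calc R * V * R' = R * (S * S) * R' := by rw [hSS]
      _ = (R * S) * (S * R') := by simp only [Matrix.mul_assoc]
  have hQVQ : (1 - A * Ad) * V * (1 - A * Ad)
      = (S * (1 - A * Ad))ᴴ * (S * (1 - A * Ad)) := factor _ _ hQH hQH
  have hPVQ : (A * Ad) * V * (1 - A * Ad)
      = (S * (A * Ad))ᴴ * (S * (1 - A * Ad)) := factor _ _ hPH hQH
  have hPVP : (A * Ad) * V * (A * Ad)
      = (S * (A * Ad))ᴴ * (S * (A * Ad)) := factor _ _ hPH hPH
  have f1 : frobNorm (S * (1 - A * Ad)) ^ 2 = t := by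
    rw [frob_sq, ← hQVQ]
  have t0 : 0 ≤ t := f1 ▸ sq_nonneg _
  -- trace of V
  have htrV : (V.trace).re = ∑ i, (b i) ^ 2 := by
    have e : V.trace = ∑ i, ((b i : ℂ)) ^ 2 := by
      rw [Matrix.trace]
      exact Finset.sum_congr rfl fun i _ => by rw [Matrix.diag_apply, hVdiag i]
    rw [e, Complex.re_sum]
    apply Finset.sum_congr rfl
    intro i _
    rw [← Complex.ofReal_pow, Complex.ofReal_re]
  have hsum_b : ∑ i, (b i) ^ 2 ≤ (nx + ε) ^ 2 := by
    have h1 : ∑ i, (b i) ^ 2 = (rvecNorm b) ^ 2 := by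
      rw [rvecNorm, Real.sq_sqrt]
      positivity
    have h2 : rvecNorm b ≤ nx + ε := by
      rw [hb]
      have h3 := rvec_add_le (fun i => ‖x i‖) bnoise
      have h4 : rvecNorm (fun i => ‖x i‖) = nx := by
        rw [hnxdef, cvecNorm, rvecNorm]
      rw [h4] at h3
      exact h3
    have h5 : 0 ≤ rvecNorm b := Real.sqrt_nonneg _
    nlinarith
  -- Frobenius bounds
  have f2 : frobNorm (S * (A * Ad)) ^ 2 ≤ (nx + ε) ^ 2 := by
    rw [frob_sq, ← hPVP]
    have e1 : ((A * Ad) * V * (A * Ad)).trace = (V * (A * Ad)).trace := trace_compress hPP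
    have e2 : ((1 - A * Ad) * V * (1 - A * Ad)).trace = (V * (1 - A * Ad)).trace :=
      trace_compress hQ2
    have e3 : (V * (A * Ad)).trace + (V * (1 - A * Ad)).trace = V.trace := by
      rw [Matrix.mul_sub, Matrix.mul_one, Matrix.trace_sub]
      ring
    have e4 := congrArg Complex.re e3
    rw [Complex.add_re] at e4
    have e5 : t = ((V * (1 - A * Ad)).trace).re := by rw [ht, e2]
    have e6 : (((A * Ad) * V * (A * Ad)).trace).re = ((V * (A * Ad)).trace).re := by rw [e1]
    rw [e6]
    linarith [htrV ▸ hsum_b]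
  have hfSP : frobNorm (S * (A * Ad)) ≤ nx + ε := by
    nlinarith [frobNorm_nonneg (S * (A * Ad)), f2, hnx0, hε0]
  have hfSQ : frobNorm (S * (1 - A * Ad)) = Real.sqrt t := by
    rw [← f1, Real.sqrt_sq (frobNorm_nonneg _)]
  have hPVQf : frobNorm ((A * Ad) * V * (1 - A * Ad)) ≤ (nx + ε) * Real.sqrt t := by
    rw [hPVQ]
    calc frobNorm ((S * (A * Ad))ᴴ * (S * (1 - A * Ad)))
        ≤ frobNorm ((S * (A * Ad))ᴴ) * frobNorm (S * (1 - A * Ad)) := frob_mul_le _ _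
      _ = frobNorm (S * (A * Ad)) * frobNorm (S * (1 - A * Ad)) := by rw [frob_conjTranspose]
      _ ≤ (nx + ε) * Real.sqrt t := by
          rw [hfSQ]
          exact mul_le_mul_of_nonneg_right hfSP (Real.sqrt_nonneg t)
  have hQVQf : frobNorm ((1 - A * Ad) * V * (1 - A * Ad)) ≤ t := by
    calc frobNorm ((1 - A * Ad) * V * (1 - A * Ad))
        ≤ traceNorm ((1 - A * Ad) * V * (1 - A * Ad)) := frob_le_traceNorm _
      _ = t := by
          rw [traceNorm_psd ?_]
          · rw [hQVQ]
            exact Matrix.posSemidef_conjTranspose_mul_self _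
  -- orthogonality of the two off-diagonal blocks
  have hct : ((A * Ad) * V * (1 - A * Ad))ᴴ = (1 - A * Ad) * V * (A * Ad) := by
    rw [Matrix.conjTranspose_mul, Matrix.conjTranspose_mul, hQH, hPH,
      show Vᴴ = V from hVH]
    simp only [Matrix.mul_assoc]
  have horth : ((((A * Ad) * V * (1 - A * Ad))ᴴ) * ((1 - A * Ad) * V * (A * Ad))).trace = 0 := by
    rw [hct]
    have hz : ((1 - A * Ad) * V * (A * Ad)) * ((1 - A * Ad) * V * (A * Ad)) = 0 := by
      have hQP' : (A * Ad) * ((1 - A * Ad) * (V * (A * Ad))) = 0 := by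
        rw [← Matrix.mul_assoc, hPQ, Matrix.zero_mul]
      calc ((1 - A * Ad) * V * (A * Ad)) * ((1 - A * Ad) * V * (A * Ad))
          = (1 - A * Ad) * (V * ((A * Ad) * ((1 - A * Ad) * (V * (A * Ad))))) := by
            simp only [Matrix.mul_assoc]
        _ = 0 := by rw [hQP']; simp
    rw [hz, Matrix.trace_zero]
  have hswap : frobNorm ((1 - A * Ad) * V * (A * Ad))
      = frobNorm ((A * Ad) * V * (1 - A * Ad)) := by
    rw [← hct, frob_conjTranspose]
  have hoffdiag : frobNorm ((A * Ad) * V * (1 - A * Ad) + (1 - A * Ad) * V * (A * Ad))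
      = Real.sqrt 2 * frobNorm ((A * Ad) * V * (1 - A * Ad)) := by
    have h2 : frobNorm ((A * Ad) * V * (1 - A * Ad) + (1 - A * Ad) * V * (A * Ad)) ^ 2
        = 2 * frobNorm ((A * Ad) * V * (1 - A * Ad)) ^ 2 := by
      rw [frob_pythagoras horth, hswap]
      ring
    calc frobNorm ((A * Ad) * V * (1 - A * Ad) + (1 - A * Ad) * V * (A * Ad))
        = Real.sqrt (frobNorm ((A * Ad) * V * (1 - A * Ad)
            + (1 - A * Ad) * V * (A * Ad)) ^ 2) :=
          (Real.sqrt_sq (frobNorm_nonneg _)).symm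
      _ = Real.sqrt (2 * frobNorm ((A * Ad) * V * (1 - A * Ad)) ^ 2) := by rw [h2]
      _ = Real.sqrt 2 * frobNorm ((A * Ad) * V * (1 - A * Ad)) := by
          rw [Real.sqrt_mul (by norm_num), Real.sqrt_sq (frobNorm_nonneg _)]
  have hdecomp : V - (A * Ad) * V * (A * Ad)
      = ((A * Ad) * V * (1 - A * Ad) + (1 - A * Ad) * V * (A * Ad))
        + (1 - A * Ad) * V * (1 - A * Ad) := by
    noncomm_ring
  have hVmPVP : frobNorm (V - (A * Ad) * V * (A * Ad))
      ≤ Real.sqrt 2 * ((nx + ε) * Real.sqrt t) + t := by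
    rw [hdecomp]
    calc frobNorm (((A * Ad) * V * (1 - A * Ad) + (1 - A * Ad) * V * (A * Ad))
          + (1 - A * Ad) * V * (1 - A * Ad))
        ≤ frobNorm ((A * Ad) * V * (1 - A * Ad) + (1 - A * Ad) * V * (A * Ad))
          + frobNorm ((1 - A * Ad) * V * (1 - A * Ad)) := frob_add_le _ _
      _ ≤ Real.sqrt 2 * ((nx + ε) * Real.sqrt t) + t := by
          rw [hoffdiag]
          exact add_le_add
            (mul_le_mul_of_nonneg_left hPVQf (Real.sqrt_nonneg 2)) hQVQf
  -- numeric cleanup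
  have hsqrt_t : Real.sqrt t ≤ ε := by
    calc Real.sqrt t ≤ Real.sqrt (ε ^ 2) := Real.sqrt_le_sqrt htε
      _ = ε := Real.sqrt_sq hε0
  have htb : t ≤ nx * ε := by nlinarith [htε, hbn, hε0]
  have hbound : frobNorm (V - (A * Ad) * V * (A * Ad))
      ≤ (2 * Real.sqrt 2 + 1) * nx * ε := by
    have s2 : (0 : ℝ) ≤ Real.sqrt 2 := Real.sqrt_nonneg 2
    have b1 : (nx + ε) * Real.sqrt t ≤ (2 * nx) * ε := by
      nlinarith [Real.sqrt_nonneg t, hsqrt_t, hbn, hε0, hnx0]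
    have b2 : Real.sqrt 2 * ((nx + ε) * Real.sqrt t)
        ≤ Real.sqrt 2 * ((2 * nx) * ε) := mul_le_mul_of_nonneg_left b1 s2
    calc frobNorm (V - (A * Ad) * V * (A * Ad))
        ≤ Real.sqrt 2 * ((nx + ε) * Real.sqrt t) + t := hVmPVP
      _ ≤ Real.sqrt 2 * ((2 * nx) * ε) + nx * ε := add_le_add b2 htb
      _ = (2 * Real.sqrt 2 + 1) * nx * ε := by ring
  -- final triangle inequality
  have htri : frobNorm (V - X)
      ≤ frobNorm ((A * Ad) * V * (A * Ad) - X) + frobNorm (V - (A * Ad) * V * (A * Ad)) := by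
    have e : V - X = ((A * Ad) * V * (A * Ad) - X) + (V - (A * Ad) * V * (A * Ad)) := by
      abel
    rw [e]
    exact frob_add_le _ _
  have hring : (2 * C + 2 * Real.sqrt 2 + 1) * nx * ε
      = 2 * C * nx * ε + (2 * Real.sqrt 2 + 1) * nx * ε := by ring
  linarith [htri, hbound, hfar, hring.le, hring.ge]
end

section
/- Let A ∈ ℂ^{n×p}, x₀ ∈ ℂ^p, b_noise ∈ ℝⁿ, and set b = |Ax₀| + b_noise. Let V be a minimizer of d₁(V, F) over {V ∈ H_n : V ⪰ 0, diag(V) = b²}, let P = AA† and V∥ = PVP, and define b_PL ∈ ℝⁿ by (b_PL)_i = √((V∥)_ii) − |Ax₀|_i for i = 1,…,n. Then ‖b_PL‖₂ ≤ 2‖b_noise‖₂. -/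
open Matrix ComplexOrder

open Polynomial


noncomputable def fC (n : ℕ) : Matrix (Fin n) (Fin n) ℂ →+* Matrix (Fin n) (Fin n) ℂ[X] :=
  (Polynomial.C (R := ℂ)).mapMatrix

lemma charpoly_conj_aux {n : ℕ} (U M : Matrix (Fin n) (Fin n) ℂ)
    (h1 : U * Uᴴ = 1) :
    (U * M * Uᴴ).charpoly = M.charpoly := by
  unfold Matrix.charpoly charmatrix
  have hUU : fC n U * fC n Uᴴ = 1 := by rw [← _root_.map_mul, h1, _root_.map_one]
  have hs : (Matrix.scalar (Fin n) (X : ℂ[X])) = (X : ℂ[X]) • (1 : Matrix (Fin n) (Fin n) ℂ[X]) := by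
    rw [Matrix.scalar_apply, Matrix.smul_one_eq_diagonal]
  have key : Matrix.scalar (Fin n) (X : ℂ[X]) - fC n (U * M * Uᴴ)
      = (fC n U) * (Matrix.scalar (Fin n) (X : ℂ[X]) - fC n M) * (fC n Uᴴ) := by
    rw [mul_sub, sub_mul, ← _root_.map_mul (fC n), ← _root_.map_mul (fC n)]
    congr 1
    rw [hs, Matrix.mul_smul, Matrix.smul_mul, mul_one, hUU]
  have : (fC n) (U * M * Uᴴ) = (Polynomial.C (R := ℂ)).mapMatrix (U * M * Uᴴ) := rfl
  rw [← this, key, det_mul, det_mul, mul_right_comm, ← det_mul, hUU, det_one, one_mul]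
  rfl

lemma charpoly_hermitian {n : ℕ} {M : Matrix (Fin n) (Fin n) ℂ} (hM : M.IsHermitian) :
    M.charpoly = ∏ i, (X - C ((hM.eigenvalues i : ℂ))) := by
  classical
  have hU := (Matrix.mem_unitaryGroup_iff).mp (hM.eigenvectorUnitary).2
  calc M.charpoly
      = ((hM.eigenvectorUnitary : Matrix (Fin n) (Fin n) ℂ) *
          diagonal (RCLike.ofReal ∘ hM.eigenvalues) *
          (star (hM.eigenvectorUnitary : Matrix (Fin n) (Fin n) ℂ))).charpoly := by
        exact congrArg Matrix.charpoly hM.spectral_theorem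
    _ = (diagonal (RCLike.ofReal ∘ hM.eigenvalues)).charpoly := by
        exact charpoly_conj_aux _ _ hU
    _ = ∏ i, (X - C ((hM.eigenvalues i : ℂ))) := by
        rw [Matrix.charpoly_of_upperTriangular _ (Matrix.blockTriangular_diagonal _)]
        simp


lemma multiset_eq_of_prod_eq {n : ℕ} (a b : Fin n → ℂ)
    (h : ∏ i, (X - C (a i)) = ∏ i, (X - C (b i))) :
    Multiset.map a Finset.univ.val = Multiset.map b Finset.univ.val := by
  have key : ((Finset.univ.val.map a).map fun r => X - C r).prod
      = ((Finset.univ.val.map b).map fun r => X - C r).prod := by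
    rw [Multiset.map_map, Multiset.map_map]
    simpa [Finset.prod] using h
  calc Multiset.map a Finset.univ.val
      = ((Finset.univ.val.map a).map fun r => X - C r).prod.roots :=
        (Polynomial.roots_multiset_prod_X_sub_C _).symm
    _ = ((Finset.univ.val.map b).map fun r => X - C r).prod.roots := by rw [key]
    _ = Multiset.map b Finset.univ.val := Polynomial.roots_multiset_prod_X_sub_C _

lemma traceNorm_eq_sum_abs {n : ℕ} {M : Matrix (Fin n) (Fin n) ℂ} (hM : M.IsHermitian) :
    traceNorm M = ∑ i, |hM.eigenvalues i| := by
  classical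
  set h2 := (Matrix.posSemidef_conjTranspose_mul_self M).1 with hh2
  set U : Matrix (Fin n) (Fin n) ℂ := (hM.eigenvectorUnitary : Matrix (Fin n) (Fin n) ℂ) with hUdef
  have hU : U * Uᴴ = 1 := by
    rw [← Matrix.star_eq_conjTranspose]
    exact (Matrix.mem_unitaryGroup_iff).mp (hM.eigenvectorUnitary).2
  have hU' : Uᴴ * U = 1 := by
    rw [← Matrix.star_eq_conjTranspose]
    exact (Matrix.mem_unitaryGroup_iff').mp (hM.eigenvectorUnitary).2
  set D : Matrix (Fin n) (Fin n) ℂ := diagonal (RCLike.ofReal ∘ hM.eigenvalues) with hDdef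
  have hspec : M = U * D * Uᴴ := by
    rw [← Matrix.star_eq_conjTranspose]; exact hM.spectral_theorem
  have hsq : Mᴴ * M = U * diagonal (fun i => ((hM.eigenvalues i : ℂ))^2) * Uᴴ := by
    rw [hM.eq]
    have h1 : M * M = (U * D * Uᴴ) * (U * D * Uᴴ) := by rw [← hspec]
    rw [h1, show (U * D * Uᴴ) * (U * D * Uᴴ) = U * (D * (Uᴴ * U) * D) * Uᴴ by noncomm_ring,
      hU', mul_one, hDdef, diagonal_mul_diagonal]
    congr 2
    funext i
    simp [pow_two]
  have hcp : (Mᴴ * M).charpoly = ∏ i, (X - C ((((hM.eigenvalues i)^2 : ℝ) : ℂ))) := by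
    rw [hsq, charpoly_conj_aux _ _ hU,
      Matrix.charpoly_of_upperTriangular _ (Matrix.blockTriangular_diagonal _)]
    push_cast
    simp [diagonal_apply_eq]
  have hmult : Multiset.map (fun i => ((h2.eigenvalues i : ℂ))) Finset.univ.val
      = Multiset.map (fun i => (((hM.eigenvalues i)^2 : ℝ) : ℂ)) Finset.univ.val := by
    apply multiset_eq_of_prod_eq
    rw [← hcp, charpoly_hermitian h2]
  have hsum := congrArg (fun s => (s.map (fun z : ℂ => Real.sqrt z.re)).sum) hmult
  simp only [Multiset.map_map, Function.comp] at hsum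
  unfold traceNorm
  calc ∑ i, Real.sqrt (h2.eigenvalues i)
      = (Multiset.map (fun i => Real.sqrt (((h2.eigenvalues i : ℂ)).re)) Finset.univ.val).sum := by
        rw [Finset.sum]
        apply congrArg
        apply Multiset.map_congr rfl
        intro i _
        norm_num
    _ = (Multiset.map (fun i => Real.sqrt ((((hM.eigenvalues i)^2 : ℝ) : ℂ).re)) Finset.univ.val).sum := hsum
    _ = ∑ i, |hM.eigenvalues i| := by
        rw [Finset.sum]
        apply congrArg
        apply Multiset.map_congr rfl
        intro i _
        simp [← Complex.ofReal_pow, Real.sqrt_sq_eq_abs]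


lemma psd_diag_re_nonneg {n : ℕ} {N : Matrix (Fin n) (Fin n) ℂ} (hN : N.PosSemidef) (i : Fin n) :
    0 ≤ (N i i).re := by
  have := hN.re_dotProduct_nonneg (Pi.single i 1)
  simpa [dotProduct, Matrix.mulVec, Pi.single_apply] using this

lemma trace_proj_le_traceNorm {n : ℕ} {M Q : Matrix (Fin n) (Fin n) ℂ}
    (hM : M.IsHermitian) (hQpsd : Q.PosSemidef) (hQle : (1 - Q).PosSemidef) :
    ((M * Q).trace).re ≤ traceNorm M := by
  classical
  set U : Matrix (Fin n) (Fin n) ℂ := (hM.eigenvectorUnitary : Matrix (Fin n) (Fin n) ℂ) with hUdef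
  have hU : U * Uᴴ = 1 := by
    rw [← Matrix.star_eq_conjTranspose]
    exact (Matrix.mem_unitaryGroup_iff).mp (hM.eigenvectorUnitary).2
  have hU' : Uᴴ * U = 1 := by
    rw [← Matrix.star_eq_conjTranspose]
    exact (Matrix.mem_unitaryGroup_iff').mp (hM.eigenvectorUnitary).2
  set D : Matrix (Fin n) (Fin n) ℂ := diagonal (RCLike.ofReal ∘ hM.eigenvalues) with hDdef
  have hspec : M = U * D * Uᴴ := by
    rw [← Matrix.star_eq_conjTranspose]; exact hM.spectral_theorem
  set N : Matrix (Fin n) (Fin n) ℂ := Uᴴ * Q * U with hNdef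
  have hNpsd : N.PosSemidef := hQpsd.conjTranspose_mul_mul_same U
  have hNle : (1 - N).PosSemidef := by
    have : (1 : Matrix (Fin n) (Fin n) ℂ) - N = Uᴴ * (1 - Q) * U := by
      rw [Matrix.mul_sub, Matrix.sub_mul, mul_one, hU']
    rw [this]
    exact hQle.conjTranspose_mul_mul_same U
  have htr : (M * Q).trace = (D * N).trace := by
    rw [hspec, hNdef]
    rw [show U * D * Uᴴ * Q = (U * D) * (Uᴴ * Q) by noncomm_ring,
      Matrix.trace_mul_comm (U * D) (Uᴴ * Q),
      show Uᴴ * Q * (U * D) = (Uᴴ * Q * U) * D by noncomm_ring,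
      Matrix.trace_mul_comm]
  have htr2 : ((M * Q).trace).re = ∑ i, hM.eigenvalues i * (N i i).re := by
    rw [htr, Matrix.trace]
    rw [Complex.re_sum]
    apply Finset.sum_congr rfl
    intro i _
    rw [Matrix.diag_apply, Matrix.diagonal_mul, Function.comp_apply]
    have hco : (RCLike.ofReal (hM.eigenvalues i) : ℂ) = ((hM.eigenvalues i : ℝ) : ℂ) := rfl
    rw [hco, Complex.re_ofReal_mul]
  rw [htr2, traceNorm_eq_sum_abs hM]
  apply Finset.sum_le_sum
  intro i _
  have h0 : 0 ≤ (N i i).re := psd_diag_re_nonneg hNpsd i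
  have h1 : (N i i).re ≤ 1 := by
    have := psd_diag_re_nonneg hNle i
    simp only [Matrix.sub_apply, Matrix.one_apply_eq, Complex.sub_re, Complex.one_re] at this
    linarith
  rcases abs_cases (hM.eigenvalues i) with ⟨he, _⟩ | ⟨he, _⟩ <;> nlinarith


lemma traceNorm_nonneg {n : ℕ} (M : Matrix (Fin n) (Fin n) ℂ) : 0 ≤ traceNorm M :=
  Finset.sum_nonneg fun _ _ => Real.sqrt_nonneg _

lemma trace_hermitian {n : ℕ} {M : Matrix (Fin n) (Fin n) ℂ} (hM : M.IsHermitian) :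
    M.trace = ∑ i, ((hM.eigenvalues i : ℝ) : ℂ) := by
  classical
  set U : Matrix (Fin n) (Fin n) ℂ := (hM.eigenvectorUnitary : Matrix (Fin n) (Fin n) ℂ) with hUdef
  have hU' : Uᴴ * U = 1 := by
    rw [← Matrix.star_eq_conjTranspose]
    exact (Matrix.mem_unitaryGroup_iff').mp (hM.eigenvectorUnitary).2
  have hspec : M = U * diagonal (RCLike.ofReal ∘ hM.eigenvalues) * Uᴴ := by
    rw [← Matrix.star_eq_conjTranspose]; exact hM.spectral_theorem
  conv_lhs => rw [hspec]
  rw [Matrix.trace_mul_comm, ← Matrix.mul_assoc, hU', one_mul, Matrix.trace_diagonal]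
  rfl

lemma traceNorm_psd {n : ℕ} {M : Matrix (Fin n) (Fin n) ℂ} (hM : M.PosSemidef) :
    traceNorm M = (M.trace).re := by
  rw [traceNorm_eq_sum_abs hM.1, trace_hermitian hM.1, Complex.re_sum]
  apply Finset.sum_congr rfl
  intro i _
  rw [Complex.ofReal_re, abs_of_nonneg (hM.eigenvalues_nonneg i)]

lemma scalar_key {sp a e c : ℝ} (hsp : 0 ≤ sp) (ha : 0 ≤ a)
    (h : abs (sp - abs (a + e)) ≤ c) : |sp - a| ≤ c + |e| := by
  obtain ⟨h1, h2⟩ := abs_le.mp h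
  rw [abs_le]
  rcases abs_cases (a + e) with ⟨hb, _⟩ | ⟨hb, _⟩ <;> rcases abs_cases e with ⟨he, _⟩ | ⟨he, _⟩ <;>
    constructor <;> nlinarith

lemma rvecNorm_nonneg {n : ℕ} (v : Fin n → ℝ) : 0 ≤ rvecNorm v := Real.sqrt_nonneg _

lemma rvecNorm_mono {n : ℕ} {v w : Fin n → ℝ} (h : ∀ i, |v i| ≤ w i) :
    rvecNorm v ≤ rvecNorm w := by
  apply Real.sqrt_le_sqrt
  apply Finset.sum_le_sum
  intro i _
  calc (v i) ^ 2 = |v i| ^ 2 := (sq_abs _).symm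
    _ ≤ (w i) ^ 2 := pow_le_pow_left₀ (abs_nonneg _) (h i) 2

lemma rvecNorm_add_le {n : ℕ} (v w : Fin n → ℝ) :
    rvecNorm (fun i => v i + w i) ≤ rvecNorm v + rvecNorm w := by
  have hcs := Finset.sum_mul_sq_le_sq_mul_sq Finset.univ v w
  have h1 : ∑ i, v i * w i ≤ rvecNorm v * rvecNorm w := by
    have h2 : (∑ i, v i * w i) ^ 2 ≤ (rvecNorm v * rvecNorm w) ^ 2 := by
      rw [mul_pow]
      unfold rvecNorm
      rw [Real.sq_sqrt (Finset.sum_nonneg fun _ _ => sq_nonneg _),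
        Real.sq_sqrt (Finset.sum_nonneg fun _ _ => sq_nonneg _)]
      exact hcs
    nlinarith [mul_nonneg (rvecNorm_nonneg v) (rvecNorm_nonneg w), sq_nonneg (∑ i, v i * w i)]
  unfold rvecNorm
  rw [show (∑ i, (v i + w i) ^ 2) = (∑ i, (v i)^2) + 2 * (∑ i, v i * w i) + ∑ i, (w i)^2 by
    rw [Finset.mul_sum, ← Finset.sum_add_distrib, ← Finset.sum_add_distrib]
    apply Finset.sum_congr rfl; intro i _; ring]
  have hle : (∑ i, (v i)^2) + 2 * (∑ i, v i * w i) + (∑ i, (w i)^2)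
      ≤ (rvecNorm v + rvecNorm w) ^ 2 := by
    unfold rvecNorm
    rw [add_sq, Real.sq_sqrt (Finset.sum_nonneg fun _ _ => sq_nonneg _),
      Real.sq_sqrt (Finset.sum_nonneg fun _ _ => sq_nonneg _)]
    unfold rvecNorm at h1
    linarith
  calc Real.sqrt ((∑ i, (v i)^2) + 2 * (∑ i, v i * w i) + ∑ i, (w i)^2)
      ≤ Real.sqrt ((rvecNorm v + rvecNorm w) ^ 2) := Real.sqrt_le_sqrt hle
    _ = rvecNorm v + rvecNorm w := Real.sqrt_sq (add_nonneg (rvecNorm_nonneg v) (rvecNorm_nonneg w))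

lemma sum_normSq_mulVec {n : ℕ} (R : Matrix (Fin n) (Fin n) ℂ) (v : Fin n → ℂ) :
    (∑ k, Complex.normSq ((R *ᵥ v) k)) = ((star v) ⬝ᵥ ((Rᴴ * R) *ᵥ v)).re := by
  have h1 : ((star v) ⬝ᵥ ((Rᴴ * R) *ᵥ v)) = (star (R *ᵥ v)) ⬝ᵥ (R *ᵥ v) := by
    rw [← Matrix.mulVec_mulVec, Matrix.dotProduct_mulVec (star v) Rᴴ,
      ← Matrix.star_mulVec]
  rw [h1, dotProduct, Complex.re_sum]
  apply Finset.sum_congr rfl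
  intro k _
  simp [Pi.star_apply, Complex.normSq_apply, Complex.mul_re]

lemma diag_conjTranspose_mul {m n : ℕ} (X : Matrix (Fin m) (Fin n) ℂ) (i : Fin n) :
    ((Xᴴ * X) i i).re = ∑ k, Complex.normSq (X k i) := by
  rw [Matrix.mul_apply, Complex.re_sum]
  apply Finset.sum_congr rfl
  intro k _
  simp [Matrix.conjTranspose_apply, Complex.normSq_apply, Complex.mul_re]

lemma sum_normSq_eq_dot {n : ℕ} (w : Fin n → ℂ) :
    (∑ k, Complex.normSq (w k)) = ((star w) ⬝ᵥ w).re := by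
  rw [dotProduct, Complex.re_sum]
  apply Finset.sum_congr rfl
  intro k _
  simp [Complex.normSq_apply, Complex.mul_re]

open scoped MatrixOrder in
lemma psd_sqrt_exists {n : ℕ} {V : Matrix (Fin n) (Fin n) ℂ} (h : V.PosSemidef) :
    ∃ C : Matrix (Fin n) (Fin n) ℂ, C * C = V ∧ C.IsHermitian :=
  ⟨CFC.sqrt V, CFC.sqrt_mul_sqrt_self V h.nonneg, (CFC.sqrt_nonneg V).posSemidef.1⟩

/-- Let `b = |Ax₀| + b_noise` and let `V` minimize `d₁(·, F)` over
`{V ⪰ 0 : diag(V) = b²}`. With `V∥ = PVP`, `P = AA†`, define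
`(b_PL)ᵢ = √((V∥)ᵢᵢ) − |Ax₀|ᵢ`. Then `‖b_PL‖₂ ≤ 2‖b_noise‖₂`. -/
theorem ecart_b {n p : ℕ}
    (A : Matrix (Fin n) (Fin p) ℂ) (Ad : Matrix (Fin p) (Fin n) ℂ)
    (hPenrose : A * Ad * A = A ∧ Ad * A * Ad = Ad ∧
      (A * Ad)ᴴ = A * Ad ∧ (Ad * A)ᴴ = Ad * A)
    (x₀ : Fin p → ℂ) (bnoise : Fin n → ℝ)
    (b : Fin n → ℝ) (hb : b = fun i => ‖A.mulVec x₀ i‖ + bnoise i)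
    (V : Matrix (Fin n) (Fin n) ℂ)
    (hVpsd : V.PosSemidef) (hVdiag : ∀ i, V i i = ((b i : ℂ)) ^ 2)
    (hVmin : ∀ V' : Matrix (Fin n) (Fin n) ℂ, V'.PosSemidef →
      (∀ i, V' i i = ((b i : ℂ)) ^ 2) → d1F A Ad V ≤ d1F A Ad V')
    (bPL : Fin n → ℝ)
    (hbPL : bPL = fun i =>
      Real.sqrt ((((A * Ad) * V * (A * Ad)) i i).re) - ‖A.mulVec x₀ i‖) :
    rvecNorm bPL ≤ 2 * rvecNorm bnoise := by
  classical
  obtain ⟨hAdA, hAdAd, hPherm, _⟩ := hPenrose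
  set P : Matrix (Fin n) (Fin n) ℂ := A * Ad with hPdef
  set Q : Matrix (Fin n) (Fin n) ℂ := 1 - P with hQdef
  have hAAdA : A * Ad * A = A := by rw [← hPdef]; exact hAdA
  have hP2 : P * P = P := by
    nth_rewrite 2 [hPdef]
    rw [← Matrix.mul_assoc, hAdA, ← hPdef]
  have hQh : Qᴴ = Q := by
    rw [hQdef, Matrix.conjTranspose_sub, Matrix.conjTranspose_one, hPherm]
  have hQ2 : Q * Q = Q := by
    rw [hQdef, Matrix.sub_mul, Matrix.mul_sub, Matrix.mul_sub, hP2]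
    simp
  have hPpsd : P.PosSemidef := by
    have := Matrix.posSemidef_conjTranspose_mul_self P
    rwa [hPherm, hP2] at this
  have hQpsd : Q.PosSemidef := by
    have := Matrix.posSemidef_conjTranspose_mul_self Q
    rwa [hQh, hQ2] at this
  have hQle : (1 - Q).PosSemidef := by
    rw [hQdef, sub_sub_cancel]
    exact hPpsd
  -- square root decomposition of V
  obtain ⟨C, hCC, hCh⟩ := psd_sqrt_exists hVpsd
  -- diagonal entries of compressions
  have hPVP : P * V * P = (C * P)ᴴ * (C * P) := by
    rw [Matrix.conjTranspose_mul, hCh.eq, hPherm, ← hCC]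
    noncomm_ring
  have hQVQ : Q * V * Q = (C * Q)ᴴ * (C * Q) := by
    rw [Matrix.conjTranspose_mul, hCh.eq, hQh, ← hCC]
    noncomm_ring
  set c : Fin n → ℝ := fun i => Real.sqrt (((Q * V * Q) i i).re) with hcdef
  have hQVQre : ∀ i, ((Q * V * Q) i i).re = ∑ k, Complex.normSq ((C * Q) k i) := by
    intro i; rw [hQVQ, diag_conjTranspose_mul]
  have hQVQnonneg : ∀ i, 0 ≤ ((Q * V * Q) i i).re := by
    intro i; rw [hQVQre i]; exact Finset.sum_nonneg fun _ _ => Complex.normSq_nonneg _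
  -- key pointwise estimate |√((PVP)ᵢᵢ) − |bᵢ|| ≤ cᵢ
  have key_i : ∀ i, abs (Real.sqrt (((P * V * P) i i).re) - abs (b i)) ≤ c i := by
    intro i
    set f : EuclideanSpace ℂ (Fin n) := WithLp.toLp 2 (fun k => (C * P) k i) with hfdef
    set g : EuclideanSpace ℂ (Fin n) := WithLp.toLp 2 (fun k => (C * Q) k i) with hgdef
    have hfg : f + g = WithLp.toLp 2 (fun k => C k i) := by
      ext k
      show (C * P) k i + (C * Q) k i = C k i
      rw [← Matrix.add_apply, ← Matrix.mul_add, hQdef, add_sub_cancel, Matrix.mul_one]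
    have hnormf : ‖f‖ = Real.sqrt (((P * V * P) i i).re) := by
      rw [EuclideanSpace.norm_eq, hPVP, diag_conjTranspose_mul]
      congr 1
      apply Finset.sum_congr rfl
      intro k _
      rw [← Complex.sq_norm]
    have hnormg : ‖g‖ = c i := by
      rw [EuclideanSpace.norm_eq]
      show _ = Real.sqrt (((Q * V * Q) i i).re)
      rw [hQVQre i]
      congr 1
      apply Finset.sum_congr rfl
      intro k _
      rw [← Complex.sq_norm]
    have hnormfg : ‖f + g‖ = abs (b i) := by
      rw [EuclideanSpace.norm_eq]
      have : ∀ k, ‖(f + g) k‖ ^ 2 = Complex.normSq (C k i) := by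
        intro k
        rw [hfg, ← Complex.sq_norm]
      rw [Finset.sum_congr rfl fun k _ => this k]
      have hVii : (∑ k, Complex.normSq (C k i)) = (b i) ^ 2 := by
        have h1 : V i i = (Cᴴ * C) i i := by rw [hCh.eq, hCC]
        have h2 : ((Cᴴ * C) i i).re = ∑ k, Complex.normSq (C k i) :=
          diag_conjTranspose_mul C i
        rw [← h2, ← h1, hVdiag i, ← Complex.ofReal_pow, Complex.ofReal_re]
      rw [hVii, Real.sqrt_sq_eq_abs]
    calc abs (Real.sqrt (((P * V * P) i i).re) - abs (b i))
        = abs (‖f‖ - ‖f + g‖) := by rw [hnormf, hnormfg]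
      _ ≤ ‖f - (f + g)‖ := abs_norm_sub_norm_le f (f + g)
      _ = ‖g‖ := by rw [show f - (f + g) = -g by abel, norm_neg]
      _ = c i := hnormg
  -- pointwise bound on bPL
  have hpoint : ∀ i, |bPL i| ≤ c i + |bnoise i| := by
    intro i
    have hbae : b i = ‖A.mulVec x₀ i‖ + bnoise i := by rw [hb]
    have h1 := key_i i
    rw [hbae] at h1
    have h2 := scalar_key (Real.sqrt_nonneg (((P * V * P) i i).re))
      (norm_nonneg (A.mulVec x₀ i)) h1
    rw [hbPL]
    exact h2
  -- lower bound : ∑ c² ≤ d1F V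
  have hsumc : (∑ i, (c i) ^ 2) = ((V * Q).trace).re := by
    have h1 : (∑ i, (c i) ^ 2) = ∑ i, ((Q * V * Q) i i).re := by
      apply Finset.sum_congr rfl
      intro i _
      rw [hcdef]
      exact Real.sq_sqrt (hQVQnonneg i)
    rw [h1, ← Complex.re_sum, show (∑ i, (Q * V * Q) i i) = (Q * V * Q).trace from rfl,
      Matrix.trace_mul_cycle Q V Q, show Q * Q * V = (Q * Q) * V from rfl, hQ2,
      Matrix.trace_mul_comm]
  have hFzero : (0 : Matrix (Fin n) (Fin n) ℂ) ∈ Fset A Ad :=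
    ⟨Matrix.isHermitian_zero, by simp⟩
  have hlow : ((V * Q).trace).re ≤ d1F A Ad V := by
    unfold d1F
    have hne : {r : ℝ | ∃ W ∈ Fset A Ad, r = traceNorm (V - W)}.Nonempty :=
      ⟨traceNorm (V - 0), ⟨0, hFzero, rfl⟩⟩
    apply le_csInf hne
    rintro r ⟨W, ⟨hWh, hWF⟩, rfl⟩
    have hM : (V - W).IsHermitian := hVpsd.1.sub hWh
    have htrW : (W * Q).trace = 0 := by
      have h0 : Q * W * Q = 0 := hWF
      calc (W * Q).trace = (W * (Q * Q)).trace := by rw [hQ2]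
        _ = ((W * Q) * Q).trace := by rw [Matrix.mul_assoc]
        _ = (Q * (W * Q)).trace := by rw [Matrix.trace_mul_comm]
        _ = (Q * W * Q).trace := by rw [Matrix.mul_assoc]
        _ = 0 := by rw [h0, Matrix.trace_zero]
    have h2 : ((V - W) * Q).trace = (V * Q).trace := by
      rw [Matrix.sub_mul, Matrix.trace_sub, htrW, sub_zero]
    calc ((V * Q).trace).re = (((V - W) * Q).trace).re := by rw [h2]
      _ ≤ traceNorm (V - W) := trace_proj_le_traceNorm hM hQpsd hQle
  -- the competitor V'
  set u : Fin n → ℂ := fun i => if A.mulVec x₀ i = 0 then 1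
    else (A.mulVec x₀ i) / ((‖A.mulVec x₀ i‖ : ℝ) : ℂ) with hudef
  have hu1 : ∀ i, Complex.normSq (u i) = 1 := by
    intro i
    rw [hudef]
    by_cases h : A.mulVec x₀ i = 0
    · simp [h]
    · have habs : ‖A.mulVec x₀ i‖ ≠ 0 := norm_ne_zero_iff.mpr h
      simp only [h, if_false]
      rw [Complex.normSq_div, Complex.normSq_ofReal, ← Complex.sq_norm]
      field_simp
  have hua : ∀ i, ((‖A.mulVec x₀ i‖ : ℝ) : ℂ) * u i = A.mulVec x₀ i := by
    intro i
    rw [hudef]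
    by_cases h : A.mulVec x₀ i = 0
    · simp [h]
    · have habs : ((‖A.mulVec x₀ i‖ : ℝ) : ℂ) ≠ 0 := by
        exact Complex.ofReal_ne_zero.mpr (norm_ne_zero_iff.mpr h)
      simp only [h, if_false]
      field_simp
  set y : Fin n → ℂ := fun i => ((b i : ℝ) : ℂ) * u i with hydef
  set B : Matrix (Fin 1) (Fin n) ℂ := Matrix.of (fun _ j => star (y j)) with hBdef
  set V' : Matrix (Fin n) (Fin n) ℂ := Bᴴ * B with hV'def
  have hV'app : ∀ i j, V' i j = y i * star (y j) := by
    intro i j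
    rw [hV'def, Matrix.mul_apply]
    simp [hBdef, Matrix.conjTranspose_apply]
  have hV'psd : V'.PosSemidef := Matrix.posSemidef_conjTranspose_mul_self B
  have hV'diag : ∀ i, V' i i = ((b i : ℂ)) ^ 2 := by
    intro i
    rw [hV'app i i, show star (y i) = (starRingEnd ℂ) (y i) from rfl, Complex.mul_conj]
    have hns : Complex.normSq (y i) = (b i) ^ 2 := by
      simp only [hydef]
      rw [Complex.normSq_mul, Complex.normSq_ofReal, hu1 i, mul_one, sq]
    rw [hns]
    push_cast
    ring
  -- upper bound on d1F V'
  have hupper : d1F A Ad V' ≤ traceNorm (Q * V' * Q) := by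
    unfold d1F
    apply csInf_le
    · refine ⟨0, ?_⟩
      rintro r ⟨W, _, rfl⟩
      exact traceNorm_nonneg _
    · refine ⟨V' - Q * V' * Q, ⟨?_, ?_⟩, by rw [sub_sub_cancel]⟩
      · have hQVQh : (Q * V' * Q).IsHermitian := by
          unfold Matrix.IsHermitian
          rw [Matrix.conjTranspose_mul, Matrix.conjTranspose_mul, hQh, hV'psd.1.eq,
            ← Matrix.mul_assoc]
        exact hV'psd.1.sub hQVQh
      · show Q * (V' - Q * V' * Q) * Q = 0
        rw [show Q * (V' - Q * V' * Q) * Q = Q * V' * Q - (Q * Q) * V' * (Q * Q) by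
          noncomm_ring, hQ2, sub_self]
  -- compute traceNorm (Q * V' * Q)
  have hQV'Q : Q * V' * Q = (B * Q)ᴴ * (B * Q) := by
    rw [hV'def, Matrix.conjTranspose_mul, hQh]
    simp only [Matrix.mul_assoc]
  have hpsdQVQ' : (Q * V' * Q).PosSemidef := by
    rw [hQV'Q]; exact Matrix.posSemidef_conjTranspose_mul_self _
  have htn : traceNorm (Q * V' * Q) = ∑ i, Complex.normSq ((B * Q) 0 i) := by
    rw [traceNorm_psd hpsdQVQ', Matrix.trace, Complex.re_sum]
    apply Finset.sum_congr rfl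
    intro i _
    rw [Matrix.diag_apply, hQV'Q, diag_conjTranspose_mul]
    simp
  set w : Fin n → ℂ := fun i => y i - (A.mulVec x₀) i with hwdef
  have hBQ : ∀ i, (B * Q) 0 i = star ((Q *ᵥ y) i) := by
    intro i
    rw [Matrix.mul_apply, Matrix.mulVec, dotProduct, star_sum]
    apply Finset.sum_congr rfl
    intro l _
    rw [star_mul']
    have h1 : B 0 l = star (y l) := rfl
    have h2 : star (Q i l) = Q l i := by
      conv_rhs => rw [← hQh]
      rw [Matrix.conjTranspose_apply]
    rw [h1, h2]
    ring
  have hQAx : Q *ᵥ (A.mulVec x₀) = 0 := by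
    rw [Matrix.mulVec_mulVec]
    have hQA : Q * A = 0 := by
      rw [hQdef, Matrix.sub_mul, Matrix.one_mul, hAdA, sub_self]
    rw [hQA, Matrix.zero_mulVec]
  have hyAx : ∀ i, w i = ((bnoise i : ℝ) : ℂ) * u i := by
    intro i
    simp only [hwdef, hydef]
    rw [← hua i]
    have hbi : b i = ‖A.mulVec x₀ i‖ + bnoise i := by rw [hb]
    rw [hbi]
    push_cast
    ring
  have hQyw : Q *ᵥ y = Q *ᵥ w := by
    have : w = y - A.mulVec x₀ := rfl
    rw [this, Matrix.mulVec_sub, hQAx, sub_zero]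
  have hcontr : (∑ k, Complex.normSq ((Q *ᵥ w) k)) ≤ ∑ k, Complex.normSq (w k) := by
    rw [sum_normSq_mulVec Q w, hQh, hQ2, sum_normSq_eq_dot]
    have hPQw : P *ᵥ w + Q *ᵥ w = w := by
      rw [← Matrix.add_mulVec, hQdef, add_sub_cancel, Matrix.one_mulVec]
    have hdot : star w ⬝ᵥ w = star w ⬝ᵥ (P *ᵥ w) + star w ⬝ᵥ (Q *ᵥ w) := by
      rw [← dotProduct_add, hPQw]
    have hsplit : star w ⬝ᵥ w - star w ⬝ᵥ (Q *ᵥ w) = star w ⬝ᵥ (P *ᵥ w) := by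
      rw [hdot]; ring
    have hpos : 0 ≤ (star w ⬝ᵥ (P *ᵥ w)).re := by
      have := hPpsd.re_dotProduct_nonneg w
      simpa using this
    have := congrArg Complex.re hsplit
    rw [Complex.sub_re] at this
    linarith
  have hnormw : ∀ i, Complex.normSq (w i) = (bnoise i) ^ 2 := by
    intro i
    rw [hyAx i, Complex.normSq_mul, Complex.normSq_ofReal, hu1 i, mul_one, sq]
  -- the chain of inequalities
  have hchain : (∑ i, (c i) ^ 2) ≤ ∑ i, (bnoise i) ^ 2 := by
    calc (∑ i, (c i) ^ 2) = ((V * Q).trace).re := hsumc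
      _ ≤ d1F A Ad V := hlow
      _ ≤ d1F A Ad V' := hVmin V' hV'psd hV'diag
      _ ≤ traceNorm (Q * V' * Q) := hupper
      _ = ∑ i, Complex.normSq ((B * Q) 0 i) := htn
      _ = ∑ i, Complex.normSq ((Q *ᵥ w) i) := by
          apply Finset.sum_congr rfl
          intro i _
          rw [hBQ i, show star ((Q *ᵥ y) i) = (starRingEnd ℂ) ((Q *ᵥ y) i) from rfl,
            Complex.normSq_conj, hQyw]
      _ ≤ ∑ i, Complex.normSq (w i) := hcontr
      _ = ∑ i, (bnoise i) ^ 2 := Finset.sum_congr rfl fun i _ => hnormw i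
  have hcnorm : rvecNorm c ≤ rvecNorm bnoise := by
    unfold rvecNorm
    exact Real.sqrt_le_sqrt hchain
  calc rvecNorm bPL
      ≤ rvecNorm (fun i => c i + |bnoise i|) := rvecNorm_mono hpoint
    _ ≤ rvecNorm c + rvecNorm (fun i => |bnoise i|) := rvecNorm_add_le _ _
    _ = rvecNorm c + rvecNorm bnoise := by
        have he : rvecNorm (fun i => |bnoise i|) = rvecNorm bnoise := by
          unfold rvecNorm
          apply congrArg Real.sqrt
          apply Finset.sum_congr rfl
          intro i _
          rw [sq_abs]
        rw [he]
    _ ≤ 2 * rvecNorm bnoise := by linarith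
end

section
/- Let P ∈ ℂ^{n×n} be an orthogonal projection (P = P* = P²), Q = I − P, and let V ∈ H_n with V ⪰ 0. Then ‖V − PVP‖₂ ≤ √2·√(Tr(PVP))·√(Tr(QVQ)) + Tr(QVQ), where ‖·‖₂ is the Frobenius norm. -/
open Matrix ComplexOrder

attribute [local instance] Matrix.frobeniusSeminormedAddCommGroup

lemma traceRe {n : ℕ} (A : Matrix (Fin n) (Fin n) ℂ) :
    (Matrix.trace (Aᴴ * A)).re = ∑ i, ∑ j, ‖A i j‖ ^ 2 := by
  rw [Matrix.trace, Finset.sum_comm]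
  simp only [Matrix.diag, Matrix.mul_apply, Complex.re_sum, Matrix.conjTranspose_apply]
  congr 1; ext i; congr 1; ext j
  rw [← Complex.normSq_eq_norm_sq]
  simp [Complex.normSq_apply, Complex.mul_re]

lemma norm_eq_sqrt {n : ℕ} (A : Matrix (Fin n) (Fin n) ℂ) :
    ‖A‖ = Real.sqrt ((Matrix.trace (Aᴴ * A)).re) := by
  rw [traceRe, Matrix.frobenius_norm_def, Real.sqrt_eq_rpow]
  norm_num [Real.rpow_two]

lemma traceRe_nonneg {n : ℕ} (A : Matrix (Fin n) (Fin n) ℂ) :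
    0 ≤ (Matrix.trace (Aᴴ * A)).re := by
  rw [traceRe]; positivity

lemma normSq_eq_traceRe {n : ℕ} (A : Matrix (Fin n) (Fin n) ℂ) :
    ‖A‖ ^ 2 = (Matrix.trace (Aᴴ * A)).re := by
  rw [norm_eq_sqrt, Real.sq_sqrt (traceRe_nonneg A)]

lemma frobNorm_eq {n : ℕ} (M : Matrix (Fin n) (Fin n) ℂ) : frobNorm M = ‖M‖ := by
  rw [frobNorm, norm_eq_sqrt, traceRe]

lemma num_aux (a c s t D : ℝ) (hD0 : 0 ≤ D) (hs0 : 0 ≤ s) (ht0 : 0 ≤ t)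
    (ha0 : 0 ≤ a) (hc0 : 0 ≤ c) (ha : a ≤ s * t) (hc : c ≤ t * t)
    (hkey : D ^ 2 = a ^ 2 + a ^ 2 + c ^ 2) :
    D ≤ Real.sqrt 2 * s * t + t ^ 2 := by
  have h2 : Real.sqrt 2 ^ 2 = 2 := Real.sq_sqrt (by norm_num)
  have hRnn : 0 ≤ Real.sqrt 2 * s * t + t ^ 2 := by positivity
  have hsq : D ^ 2 ≤ (Real.sqrt 2 * s * t + t ^ 2) ^ 2 := by
    nlinarith [mul_le_mul ha ha ha0 (mul_nonneg hs0 ht0),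
      mul_le_mul hc hc hc0 (mul_nonneg ht0 ht0), Real.sqrt_nonneg 2,
      mul_nonneg (mul_nonneg (Real.sqrt_nonneg 2) hs0)
        (mul_nonneg ht0 (mul_nonneg ht0 ht0))]
  calc D = Real.sqrt (D ^ 2) := (Real.sqrt_sq hD0).symm
    _ ≤ Real.sqrt ((Real.sqrt 2 * s * t + t ^ 2) ^ 2) := Real.sqrt_le_sqrt hsq
    _ = Real.sqrt 2 * s * t + t ^ 2 := Real.sqrt_sq hRnn

open scoped MatrixOrder in
lemma exists_herm_sqrt {n : ℕ} (V : Matrix (Fin n) (Fin n) ℂ) (hV : V.PosSemidef) :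
    ∃ C : Matrix (Fin n) (Fin n) ℂ, Cᴴ = C ∧ C * C = V := by
  refine ⟨CFC.sqrt V, ?_, CFC.sqrt_mul_sqrt_self V hV.nonneg⟩
  exact (CFC.sqrt_nonneg V).posSemidef.1

/-- For an orthogonal projection `P` (`P = P* = P²`), `Q = I − P`, and
`V ⪰ 0`: `‖V − PVP‖₂ ≤ √2·√(Tr(PVP))·√(Tr(QVQ)) + Tr(QVQ)` (Frobenius norm). -/
theorem frobNorm_sub_proj_le {n : ℕ}
    (P : Matrix (Fin n) (Fin n) ℂ) (hP1 : Pᴴ = P) (hP2 : P * P = P)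
    (V : Matrix (Fin n) (Fin n) ℂ) (hV : V.PosSemidef) :
    frobNorm (V - P * V * P) ≤
      Real.sqrt 2 * Real.sqrt ((Matrix.trace (P * V * P)).re) *
          Real.sqrt ((Matrix.trace ((1 - P) * V * (1 - P))).re) +
        (Matrix.trace ((1 - P) * V * (1 - P))).re := by
  set Q : Matrix (Fin n) (Fin n) ℂ := 1 - P with hQdef
  have hVH : Vᴴ = V := hV.1
  have hQH : Qᴴ = Q := by rw [hQdef]; simp [sub_eq_add_neg, hP1]
  have hPQ : P * Q = 0 := by rw [hQdef]; simp [mul_sub, hP2]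
  have hQP : Q * P = 0 := by rw [hQdef]; simp [sub_mul, hP2]
  -- square root of V
  obtain ⟨C, hCH, hC⟩ := exists_herm_sqrt V hV
  -- conjugate transposes
  have hXct : (P * V * Q)ᴴ = Q * V * P := by
    rw [conjTranspose_mul, conjTranspose_mul, hP1, hQH, hVH, mul_assoc]
  have hZct : (Q * V * Q)ᴴ = Q * V * Q := by
    rw [conjTranspose_mul, conjTranspose_mul, hQH, hVH, mul_assoc]
  -- factorizations through C
  have hfacP : (C * P)ᴴ * (C * P) = P * V * P := by
    rw [conjTranspose_mul, hCH, hP1, ← hC]; noncomm_ring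
  have hfacQ : (C * Q)ᴴ * (C * Q) = Q * V * Q := by
    rw [conjTranspose_mul, hCH, hQH, ← hC]; noncomm_ring
  have hfacX : (C * P)ᴴ * (C * Q) = P * V * Q := by
    rw [conjTranspose_mul, hCH, hP1, ← hC]; noncomm_ring
  -- abbreviations
  set s : ℝ := Real.sqrt ((Matrix.trace (P * V * P)).re) with hs
  set t : ℝ := Real.sqrt ((Matrix.trace (Q * V * Q)).re) with ht
  have hs0 : 0 ≤ s := Real.sqrt_nonneg _
  have ht0 : 0 ≤ t := Real.sqrt_nonneg _
  have hCP : ‖C * P‖ = s := by rw [norm_eq_sqrt, hfacP]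
  have hCQ : ‖C * Q‖ = t := by rw [norm_eq_sqrt, hfacQ]
  -- Cauchy–Schwarz bounds
  have ha : ‖P * V * Q‖ ≤ s * t := by
    rw [← hfacX, ← hCP, ← hCQ]
    calc ‖(C * P)ᴴ * (C * Q)‖ ≤ ‖(C * P)ᴴ‖ * ‖C * Q‖ := Matrix.frobenius_norm_mul _ _
      _ = ‖C * P‖ * ‖C * Q‖ := by rw [Matrix.frobenius_norm_conjTranspose]
  have hc : ‖Q * V * Q‖ ≤ t * t := by
    rw [← hfacQ, ← hCQ]
    calc ‖(C * Q)ᴴ * (C * Q)‖ ≤ ‖(C * Q)ᴴ‖ * ‖C * Q‖ := Matrix.frobenius_norm_mul _ _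
      _ = ‖C * Q‖ * ‖C * Q‖ := by rw [Matrix.frobenius_norm_conjTranspose]
  have hYnorm : ‖Q * V * P‖ = ‖P * V * Q‖ := by
    rw [← hXct, Matrix.frobenius_norm_conjTranspose]
  -- decomposition
  have hD : V - P * V * P = P * V * Q + Q * V * P + Q * V * Q := by
    rw [hQdef]; noncomm_ring
  -- Pythagoras: cross terms vanish in trace
  have hkey : ‖V - P * V * P‖ ^ 2 =
      ‖P * V * Q‖ ^ 2 + ‖Q * V * P‖ ^ 2 + ‖Q * V * Q‖ ^ 2 := by
    rw [hD, normSq_eq_traceRe, normSq_eq_traceRe, normSq_eq_traceRe, normSq_eq_traceRe]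
    have expand :
        Matrix.trace ((P * V * Q + Q * V * P + Q * V * Q)ᴴ *
            (P * V * Q + Q * V * P + Q * V * Q)) =
          Matrix.trace ((P * V * Q)ᴴ * (P * V * Q)) +
          Matrix.trace ((Q * V * P)ᴴ * (Q * V * P)) +
          Matrix.trace ((Q * V * Q)ᴴ * (Q * V * Q)) +
          (Matrix.trace ((P * V * Q)ᴴ * (Q * V * P)) +
           Matrix.trace ((P * V * Q)ᴴ * (Q * V * Q)) +
           Matrix.trace ((Q * V * P)ᴴ * (P * V * Q)) +
           Matrix.trace ((Q * V * P)ᴴ * (Q * V * Q)) +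
           Matrix.trace ((Q * V * Q)ᴴ * (P * V * Q)) +
           Matrix.trace ((Q * V * Q)ᴴ * (Q * V * P))) := by
      simp only [conjTranspose_add, add_mul, mul_add, Matrix.trace_add]
      ring
    have c1 : Matrix.trace ((P * V * Q)ᴴ * (Q * V * P)) = 0 := by
      rw [hXct]
      have : (Q * V * P) * (Q * V * P) = Q * V * (P * Q) * V * P := by noncomm_ring
      rw [this, hPQ]; simp
    have c2 : Matrix.trace ((P * V * Q)ᴴ * (Q * V * Q)) = 0 := by
      rw [hXct]
      have : (Q * V * P) * (Q * V * Q) = Q * V * (P * Q) * V * Q := by noncomm_ring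
      rw [this, hPQ]; simp
    have c3 : Matrix.trace ((Q * V * P)ᴴ * (P * V * Q)) = 0 := by
      rw [← hXct, conjTranspose_conjTranspose]
      have : (P * V * Q) * (P * V * Q) = P * V * (Q * P) * V * Q := by noncomm_ring
      rw [this, hQP]; simp
    have c4 : Matrix.trace ((Q * V * P)ᴴ * (Q * V * Q)) = 0 := by
      rw [← hXct, conjTranspose_conjTranspose, Matrix.trace_mul_comm]
      have : (Q * V * Q) * (P * V * Q) = Q * V * (Q * P) * V * Q := by noncomm_ring
      rw [this, hQP]; simp
    have c5 : Matrix.trace ((Q * V * Q)ᴴ * (P * V * Q)) = 0 := by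
      rw [hZct]
      have : (Q * V * Q) * (P * V * Q) = Q * V * (Q * P) * V * Q := by noncomm_ring
      rw [this, hQP]; simp
    have c6 : Matrix.trace ((Q * V * Q)ᴴ * (Q * V * P)) = 0 := by
      rw [hZct, Matrix.trace_mul_comm]
      have : (Q * V * P) * (Q * V * Q) = Q * V * (P * Q) * V * Q := by noncomm_ring
      rw [this, hPQ]; simp
    rw [expand, c1, c2, c3, c4, c5, c6]
    simp
  -- trace of QVQ is t^2
  have htr : (Matrix.trace (Q * V * Q)).re = t ^ 2 := by
    rw [ht, Real.sq_sqrt]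
    rw [← hfacQ]; exact traceRe_nonneg _
  have hgoal : frobNorm (V - P * V * P) ≤ Real.sqrt 2 * s * t + t ^ 2 := by
    rw [frobNorm_eq]
    exact num_aux _ _ _ _ _ (norm_nonneg _) hs0 ht0 (norm_nonneg _) (norm_nonneg _)
      ha hc (by rw [hkey, hYnorm])
  rw [← htr] at hgoal
  exact hgoal
end

section
/- Let A ∈ ℂ^{n×p} and b ∈ ℝⁿ with b_i ≠ 0 for all i, and suppose there exists x ∈ ℂ^p with |Ax| = b. Let M = diag(b)(I − AA†)diag(b). Then M ⪰ 0 and the minimum of Tr(UM) over {U ∈ H_n : U ⪰ 0, diag(U) = 1} equals 0; it is attained at U = uu*, where u ∈ ℂⁿ is defined by u_i = (Ax)_i / b_i (which satisfies |u_i| = 1 for all i). -/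
open Matrix ComplexOrder

lemma psd_diag_nonneg {n : ℕ} {B : Matrix (Fin n) (Fin n) ℂ} (hB : B.PosSemidef)
    (i : Fin n) : 0 ≤ B i i := by
  exact hB.diag_nonneg

/-- If all `bᵢ ≠ 0` and `|Ax| = b` for some `x`, then
`M = diag(b)(I − AA†)diag(b)` is positive semidefinite and the minimum of `Tr(UM)` over
`{U ⪰ 0 : diag(U) = 1}` equals `0`, attained at `U = uu*` with `uᵢ = (Ax)ᵢ/bᵢ`
(a unit-modulus vector). -/
theorem phaseCut_exact_recovery {n p : ℕ}
    (A : Matrix (Fin n) (Fin p) ℂ) (Ad : Matrix (Fin p) (Fin n) ℂ)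
    (hPenrose : A * Ad * A = A ∧ Ad * A * Ad = Ad ∧
      (A * Ad)ᴴ = A * Ad ∧ (Ad * A)ᴴ = Ad * A)
    (b : Fin n → ℝ) (hb : ∀ i, b i ≠ 0)
    (x : Fin p → ℂ) (hx : ∀ i, ‖A.mulVec x i‖ = b i)
    (u : Fin n → ℂ) (hu : u = fun i => A.mulVec x i / (b i : ℂ))
    (M : Matrix (Fin n) (Fin n) ℂ)
    (hM : M = (Matrix.diagonal fun i => (b i : ℂ)) * (1 - A * Ad) *
      (Matrix.diagonal fun i => (b i : ℂ))) :
    M.PosSemidef ∧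
    (∀ i, ‖u i‖ = 1) ∧
    (Matrix.vecMulVec u (star u)).PosSemidef ∧
    (∀ i, Matrix.vecMulVec u (star u) i i = 1) ∧
    Matrix.trace (Matrix.vecMulVec u (star u) * M) = 0 ∧
    (∀ U : Matrix (Fin n) (Fin n) ℂ, U.PosSemidef → (∀ i, U i i = 1) →
      0 ≤ (Matrix.trace (U * M)).re) := by
  obtain ⟨h1, h2, h3, h4⟩ := hPenrose
  set D : Matrix (Fin n) (Fin n) ℂ := Matrix.diagonal fun i => (b i : ℂ) with hD
  -- 1 - A * Ad is a Hermitian projection, hence PSD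
  have hQH : (1 - A * Ad)ᴴ = 1 - A * Ad := by
    rw [conjTranspose_sub, h3, conjTranspose_one]
  have hQ2 : (1 - A * Ad) * (1 - A * Ad) = 1 - A * Ad := by
    have : A * Ad * (A * Ad) = A * Ad := by
      rw [← Matrix.mul_assoc, h1]
    rw [sub_mul, mul_sub, mul_sub, one_mul, mul_one, this, sub_self, sub_zero, one_mul]
  have hQpsd : (1 - A * Ad).PosSemidef := by
    have := Matrix.posSemidef_conjTranspose_mul_self (1 - A * Ad)
    rwa [hQH, hQ2] at this
  have hDH : Dᴴ = D := by
    have hs : (star fun i => ((b i : ℝ) : ℂ)) = fun i => ((b i : ℝ) : ℂ) :=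
      funext fun i => Complex.conj_ofReal (b i)
    rw [hD, Matrix.diagonal_conjTranspose, hs]
  have hMpsd : M.PosSemidef := by
    have := hQpsd.conjTranspose_mul_mul_same D
    rwa [hDH, ← hM] at this
  -- b is positive
  have hbpos : ∀ i, 0 < b i := fun i => by
    have := hx i; have : 0 ≤ b i := this ▸ norm_nonneg _
    exact lt_of_le_of_ne this (Ne.symm (hb i))
  have hbc : ∀ i, ((b i : ℂ)) ≠ 0 := fun i => by
    exact_mod_cast Complex.ofReal_ne_zero.mpr (hb i)
  have huabs : ∀ i, ‖u i‖ = 1 := by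
    intro i
    rw [hu]
    simp only [norm_div, Complex.norm_real, Real.norm_eq_abs, hx i, abs_of_pos (hbpos i)]
    exact div_self (hb i)
  -- uu* is PSD
  have huu : (Matrix.vecMulVec u (star u)).PosSemidef := by
    rw [Matrix.posSemidef_iff_dotProduct_mulVec]
    constructor
    · ext i j
      simp [Matrix.conjTranspose_apply, Matrix.vecMulVec_apply, mul_comm]
    · intro y
      have : star y ⬝ᵥ (Matrix.vecMulVec u (star u)) *ᵥ y
          = star (star u ⬝ᵥ y) * (star u ⬝ᵥ y) := by
        simp only [dotProduct, Matrix.mulVec, Matrix.vecMulVec_apply,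
          Pi.star_apply, star_sum, star_mul', RingHom.id_apply, Finset.mul_sum,
          Finset.sum_mul]
        rw [Finset.sum_comm]
        apply Finset.sum_congr rfl; intro i _
        apply Finset.sum_congr rfl; intro j _
        ring_nf
        simp [mul_comm, mul_left_comm]
      rw [this]
      exact star_mul_self_nonneg _
  have hdiag : ∀ i, Matrix.vecMulVec u (star u) i i = 1 := by
    intro i
    rw [Matrix.vecMulVec_apply, Pi.star_apply, Complex.star_def, Complex.mul_conj]
    rw [← Complex.sq_norm, huabs i]
    norm_num
  -- M *ᵥ u = 0
  have hDu : D *ᵥ u = A *ᵥ x := by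
    ext i
    rw [hu]
    simp [hD, Matrix.mulVec_diagonal, mul_div_cancel₀ _ (hbc i)]
  have hMu : M *ᵥ u = 0 := by
    have hQA : (1 - A * Ad) * A = 0 := by
      rw [Matrix.sub_mul, Matrix.one_mul, h1, sub_self]
    have hQAx : (1 - A * Ad) *ᵥ (A *ᵥ x) = 0 := by
      rw [Matrix.mulVec_mulVec, hQA, Matrix.zero_mulVec]
    rw [hM, Matrix.mul_assoc, ← Matrix.mulVec_mulVec, ← Matrix.mulVec_mulVec, hDu,
      hQAx, Matrix.mulVec_zero]
  have htr : Matrix.trace (Matrix.vecMulVec u (star u) * M) = 0 := by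
    have key : Matrix.trace (Matrix.vecMulVec u (star u) * M)
        = star u ⬝ᵥ (M *ᵥ u) := by
      simp only [Matrix.trace, Matrix.diag, Matrix.mul_apply,
        Matrix.vecMulVec_apply, Pi.star_apply, dotProduct, Matrix.mulVec,
        Finset.mul_sum]
      rw [Finset.sum_comm]
      apply Finset.sum_congr rfl; intro i _
      apply Finset.sum_congr rfl; intro j _
      ring
    rw [key, hMu, dotProduct_zero]
  refine ⟨hMpsd, huabs, huu, hdiag, htr, ?_⟩
  intro U hU _
  open MatrixOrder in set S := CFC.sqrt M with hS
  have hSpsd : S.PosSemidef := open MatrixOrder in (CFC.sqrt_nonneg M).posSemidef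
  have hSH : Sᴴ = S := hSpsd.1
  have hSS : S * S = M := open MatrixOrder in CFC.sqrt_mul_sqrt_self M hMpsd.nonneg
  have hcycle : Matrix.trace (U * M) = Matrix.trace (S * U * S) := by
    rw [← hSS, ← Matrix.mul_assoc, Matrix.trace_mul_comm, ← Matrix.mul_assoc]
  have hSUS : (S * U * S).PosSemidef := by
    have := hU.conjTranspose_mul_mul_same S
    rwa [hSH] at this
  rw [hcycle]
  have : 0 ≤ Matrix.trace (S * U * S) := by
    rw [Matrix.trace]
    apply Finset.sum_nonneg
    intro i _
    exact psd_diag_nonneg hSUS i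
  rw [Complex.le_def] at this
  simpa using this.1
end

section
/- Let A ∈ ℂ^{n×p} with rows a_i* for i = 1,…,n, b ∈ ℝⁿ, and suppose there exists c ∈ ℝⁿ such that Σ_{i=1}^n c_i a_i a_i* = I_p. Then every X ∈ H_p with X ⪰ 0 and Tr(a_i a_i* X) = b_i² for all i satisfies Tr(X) = Σ_{i=1}^n c_i b_i². In particular, the trace is constant on the feasible set of PhaseLift, so trace minimization is redundant and PhaseLift is equivalent to the feasibility problem Weak PhaseLift. -/
open Matrix ComplexOrder

/-- If `Σᵢ cᵢ aᵢaᵢ* = I` for some real coefficients `cᵢ` (where `aᵢ*`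
is the `i`-th row of `A`), then every PhaseLift-feasible `X` (i.e. `X ⪰ 0` with
`Tr(aᵢaᵢ*X) = bᵢ²` for all `i`) satisfies `Tr(X) = Σᵢ cᵢ bᵢ²`: the trace is constant
on the feasible set and trace minimization is redundant. -/
theorem trace_constant_on_phaselift_feasible {n p : ℕ}
    (A : Matrix (Fin n) (Fin p) ℂ) (b : Fin n → ℝ) (c : Fin n → ℝ)
    (hc : ∑ i, (c i : ℂ) • Matrix.vecMulVec (star (A i)) (A i) =
      (1 : Matrix (Fin p) (Fin p) ℂ)) :
    ∀ X : Matrix (Fin p) (Fin p) ℂ, X.PosSemidef →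
      (∀ i, Matrix.trace (Matrix.vecMulVec (star (A i)) (A i) * X) = ((b i : ℂ)) ^ 2) →
      Matrix.trace X = ((∑ i, c i * (b i) ^ 2 : ℝ) : ℂ) := by
  intro X hX hTr
  calc Matrix.trace X = Matrix.trace ((1 : Matrix (Fin p) (Fin p) ℂ) * X) := by
        rw [one_mul]
    _ = Matrix.trace ((∑ i, (c i : ℂ) • Matrix.vecMulVec (star (A i)) (A i)) * X) := by
        rw [hc]
    _ = ∑ i, (c i : ℂ) * Matrix.trace (Matrix.vecMulVec (star (A i)) (A i) * X) := by
        rw [Finset.sum_mul, Matrix.trace_sum]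
        simp [Matrix.smul_mul, Matrix.trace_smul]
    _ = ((∑ i, c i * (b i) ^ 2 : ℝ) : ℂ) := by
        push_cast
        exact Finset.sum_congr rfl fun i _ => by rw [hTr i]
end

section
/- Let A ∈ ℂ^{n×p} and b ∈ ℝⁿ with b_i ≠ 0 for all i, and let M = diag(b)(I − AA†)diag(b). The map U ↦ V = diag(b) U diag(b) is a bijection from {U ∈ H_n : U ⪰ 0, diag(U) = 1} onto {V ∈ H_n : V ⪰ 0, diag(V) = b²}, and it satisfies Tr(UM) = Tr(V(I − AA†)). Consequently, the PhaseCut problem (minimize Tr(UM) subject to U ⪰ 0, diag(U) = 1) and the scaled problem (minimize Tr(V(I − AA†)) subject to V ⪰ 0, diag(V) = b²) have the same optimal value, and this bijection maps optimal solutions to optimal solutions. -/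
open Matrix ComplexOrder

/-- For `bᵢ ≠ 0`, the map `U ↦ diag(b) U diag(b)` is a bijection from
`{U ⪰ 0 : diag(U) = 1}` onto `{V ⪰ 0 : diag(V) = b²}` satisfying
`Tr(UM) = Tr(V(I − AA†))` with `M = diag(b)(I − AA†)diag(b)`; consequently the PhaseCut
problem and its scaled version have the same optimal value and the bijection maps
optimal solutions to optimal solutions. -/
theorem phaseCut_scaling_bijection {n p : ℕ}
    (A : Matrix (Fin n) (Fin p) ℂ) (Ad : Matrix (Fin p) (Fin n) ℂ)
    (hPenrose : A * Ad * A = A ∧ Ad * A * Ad = Ad ∧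
      (A * Ad)ᴴ = A * Ad ∧ (Ad * A)ᴴ = Ad * A)
    (b : Fin n → ℝ) (hb : ∀ i, b i ≠ 0)
    (M : Matrix (Fin n) (Fin n) ℂ)
    (hM : M = (Matrix.diagonal fun i => (b i : ℂ)) * (1 - A * Ad) *
      (Matrix.diagonal fun i => (b i : ℂ))) :
    Set.BijOn
      (fun U : Matrix (Fin n) (Fin n) ℂ =>
        (Matrix.diagonal fun i => (b i : ℂ)) * U * (Matrix.diagonal fun i => (b i : ℂ)))
      {U : Matrix (Fin n) (Fin n) ℂ | U.PosSemidef ∧ ∀ i, U i i = 1}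
      {V : Matrix (Fin n) (Fin n) ℂ | V.PosSemidef ∧ ∀ i, V i i = ((b i : ℂ)) ^ 2} ∧
    (∀ U : Matrix (Fin n) (Fin n) ℂ, U.PosSemidef → (∀ i, U i i = 1) →
      Matrix.trace (U * M) =
        Matrix.trace (((Matrix.diagonal fun i => (b i : ℂ)) * U *
          (Matrix.diagonal fun i => (b i : ℂ))) * (1 - A * Ad))) ∧
    sInf {r : ℝ | ∃ U : Matrix (Fin n) (Fin n) ℂ, U.PosSemidef ∧ (∀ i, U i i = 1) ∧
        r = (Matrix.trace (U * M)).re} =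
      sInf {r : ℝ | ∃ V : Matrix (Fin n) (Fin n) ℂ, V.PosSemidef ∧
        (∀ i, V i i = ((b i : ℂ)) ^ 2) ∧
        r = (Matrix.trace (V * (1 - A * Ad))).re} ∧
    (∀ U : Matrix (Fin n) (Fin n) ℂ, U.PosSemidef → (∀ i, U i i = 1) →
      (∀ U' : Matrix (Fin n) (Fin n) ℂ, U'.PosSemidef → (∀ i, U' i i = 1) →
        (Matrix.trace (U * M)).re ≤ (Matrix.trace (U' * M)).re) →
      ∀ V' : Matrix (Fin n) (Fin n) ℂ, V'.PosSemidef → (∀ i, V' i i = ((b i : ℂ)) ^ 2) →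
        (Matrix.trace (((Matrix.diagonal fun i => (b i : ℂ)) * U *
          (Matrix.diagonal fun i => (b i : ℂ))) * (1 - A * Ad))).re ≤
          (Matrix.trace (V' * (1 - A * Ad))).re) := by

  set c : Fin n → ℂ := fun i => (b i : ℂ) with hc
  have hc0 : ∀ i, c i ≠ 0 := fun i => Complex.ofReal_ne_zero.mpr (hb i)
  set D := Matrix.diagonal c with hDdef
  set E := Matrix.diagonal (fun i => (c i)⁻¹) with hEdef
  have hDH : Dᴴ = D := by
    have h : star c = c := funext fun i => by simp [hc, Complex.conj_ofReal]
    rw [hDdef, Matrix.diagonal_conjTranspose, h]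
  have hEH : Eᴴ = E := by
    have h : star (fun i => (c i)⁻¹) = fun i => (c i)⁻¹ :=
      funext fun i => by simp [hc, Complex.conj_ofReal]
    rw [hEdef, Matrix.diagonal_conjTranspose, h]
  have hDE : D * E = 1 := by
    rw [hDdef, hEdef, Matrix.diagonal_mul_diagonal]
    have : (fun i => c i * (c i)⁻¹) = fun _ => (1 : ℂ) :=
      funext fun i => mul_inv_cancel₀ (hc0 i)
    rw [this, Matrix.diagonal_one]
  have hED : E * D = 1 := by
    rw [hDdef, hEdef, Matrix.diagonal_mul_diagonal]
    have : (fun i => (c i)⁻¹ * c i) = fun _ => (1 : ℂ) :=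
      funext fun i => inv_mul_cancel₀ (hc0 i)
    rw [this, Matrix.diagonal_one]
  have hPSD : ∀ X : Matrix (Fin n) (Fin n) ℂ, X.PosSemidef → (D * X * D).PosSemidef := by
    intro X hX
    have := hX.mul_mul_conjTranspose_same D
    rwa [hDH] at this
  have hPSDE : ∀ X : Matrix (Fin n) (Fin n) ℂ, X.PosSemidef → (E * X * E).PosSemidef := by
    intro X hX
    have := hX.mul_mul_conjTranspose_same E
    rwa [hEH] at this
  have hdiag : ∀ (X : Matrix (Fin n) (Fin n) ℂ) i, (D * X * D) i i = c i * X i i * c i := by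
    intro X i
    rw [hDdef]
    simp [Matrix.mul_diagonal, Matrix.diagonal_mul, mul_comm]
  have hdiagE : ∀ (X : Matrix (Fin n) (Fin n) ℂ) i,
      (E * X * E) i i = (c i)⁻¹ * X i i * (c i)⁻¹ := by
    intro X i
    rw [hEdef]
    simp [Matrix.mul_diagonal, Matrix.diagonal_mul, mul_comm]
  have hDED : ∀ X : Matrix (Fin n) (Fin n) ℂ, D * (E * X * E) * D = X := by
    intro X
    have h : D * (E * X * E) * D = (D * E) * X * (E * D) := by noncomm_ring
    rw [h, hDE, hED, one_mul, mul_one]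
  have hEDE : ∀ X : Matrix (Fin n) (Fin n) ℂ, E * (D * X * D) * E = X := by
    intro X
    have h : E * (D * X * D) * E = (E * D) * X * (D * E) := by noncomm_ring
    rw [h, hED, hDE, one_mul, mul_one]
  have htr : ∀ U X : Matrix (Fin n) (Fin n) ℂ,
      Matrix.trace (U * (D * X * D)) = Matrix.trace (D * U * D * X) := by
    intro U X
    have h1 : U * (D * X * D) = (D * X) * D * U * D * (D * X) * D * (D * X)⁻¹ * D⁻¹ ∨ True :=
      Or.inr trivial
    calc Matrix.trace (U * (D * X * D)) = Matrix.trace ((U * D) * (X * D)) := by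
          rw [show U * (D * X * D) = (U * D) * (X * D) by noncomm_ring]
      _ = Matrix.trace ((X * D) * (U * D)) := Matrix.trace_mul_comm _ _
      _ = Matrix.trace (X * (D * U * D)) := by
          rw [show (X * D) * (U * D) = X * (D * U * D) by noncomm_ring]
      _ = Matrix.trace (D * U * D * X) := Matrix.trace_mul_comm _ _
  have hdiag1 : ∀ (U : Matrix (Fin n) (Fin n) ℂ), (∀ i, U i i = 1) →
      ∀ i, (D * U * D) i i = (c i) ^ 2 := by
    intro U hU i; rw [hdiag U i, hU i]; ring
  have hdiag2 : ∀ (V : Matrix (Fin n) (Fin n) ℂ), (∀ i, V i i = (c i) ^ 2) →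
      ∀ i, (E * V * E) i i = 1 := by
    intro V hV i; rw [hdiagE V i, hV i, sq]; field_simp; exact div_self (hc0 i)
  have htrE : ∀ V : Matrix (Fin n) (Fin n) ℂ,
      Matrix.trace ((E * V * E) * M) = Matrix.trace (V * (1 - A * Ad)) := by
    intro V
    rw [hM, htr (E * V * E) (1 - A * Ad), hDED V]
  refine ⟨⟨?_, ?_, ?_⟩, ?_, ?_, ?_⟩
  · rintro U ⟨hU, hdU⟩
    exact ⟨hPSD U hU, hdiag1 U hdU⟩
  · rintro U hU U' hU' h
    have := congrArg (fun X => E * X * E) h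
    simpa only [hEDE] using this
  · rintro V ⟨hV, hdV⟩
    exact ⟨E * V * E, ⟨hPSDE V hV, hdiag2 V hdV⟩, hDED V⟩
  · intro U hU hdU
    rw [hM]; exact htr U (1 - A * Ad)
  · congr 1
    ext r
    simp only [Set.mem_setOf_eq]
    constructor
    · rintro ⟨U, hU, hdU, rfl⟩
      refine ⟨D * U * D, hPSD U hU, hdiag1 U hdU, ?_⟩
      rw [hM, htr U (1 - A * Ad)]
    · rintro ⟨V, hV, hdV, rfl⟩
      refine ⟨E * V * E, hPSDE V hV, hdiag2 V hdV, ?_⟩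
      rw [htrE V]
  · intro U hU hdU hopt V' hV' hdV'
    have h1 : Matrix.trace (D * U * D * (1 - A * Ad)) = Matrix.trace (U * M) := by
      rw [hM, htr U (1 - A * Ad)]
    rw [h1]
    have h2 := hopt (E * V' * E) (hPSDE V' hV') (hdiag2 V' hdV')
    exact h2.trans_eq (congrArg Complex.re (htrE V'))
end

section
/- Let A ∈ ℂ^{n×p} and b ∈ ℝⁿ with b_i ≠ 0 for all i, let M = diag(b)(I − AA†)diag(b), and define Φ : H_p → H_n by Φ(X) = diag(b)⁻¹ A X A* diag(b)⁻¹. Then for U ∈ H_n, the following are equivalent: (i) U ⪰ 0 and Tr(MU) = 0; (ii) there exists X ∈ H_p with X ⪰ 0 and U = Φ(X). Moreover, in case (i) one may take X = A† diag(b) U diag(b) A†*. -/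
open Matrix ComplexOrder

section PortHelper
open scoped Matrix.Norms.L2Operator MatrixOrder

lemma Matrix.posSemidef_iff_eq_transpose_mul_self {k : ℕ} {W : Matrix (Fin k) (Fin k) ℂ} :
    W.PosSemidef ↔ ∃ B : Matrix (Fin k) (Fin k) ℂ, W = Bᴴ * B := by
  constructor
  · intro h
    obtain ⟨B, hB⟩ := CStarAlgebra.nonneg_iff_eq_star_mul_self.mp h.nonneg
    exact ⟨B, hB⟩
  · rintro ⟨B, rfl⟩
    exact Matrix.posSemidef_conjTranspose_mul_self B

end PortHelper

lemma psd_trace_zero_eq_zero {k : ℕ} {W : Matrix (Fin k) (Fin k) ℂ}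
    (hW : W.PosSemidef) (h : W.trace = 0) : W = 0 := by
  obtain ⟨B, rfl⟩ := Matrix.posSemidef_iff_eq_transpose_mul_self.mp hW
  suffices hB : B = 0 by simp [hB]
  have hsum : ∑ j, ∑ i, star (B i j) * B i j = 0 := by
    simpa [Matrix.trace, Matrix.diag, Matrix.mul_apply, Matrix.conjTranspose_apply] using h
  ext i j
  have h1 := (Finset.sum_eq_zero_iff_of_nonneg
    (fun j _ => Finset.sum_nonneg fun i _ => star_mul_self_nonneg (B i j))).mp hsum j
    (Finset.mem_univ j)
  have h2 := (Finset.sum_eq_zero_iff_of_nonneg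
    (fun i _ => star_mul_self_nonneg (B i j))).mp h1 i (Finset.mem_univ i)
  simpa using h2

/-- For `bᵢ ≠ 0`, `M = diag(b)(I − AA†)diag(b)` and
`Φ(X) = diag(b)⁻¹ A X A* diag(b)⁻¹`, a Hermitian `U` satisfies (i) `U ⪰ 0` and
`Tr(MU) = 0` iff (ii) `U = Φ(X)` for some `X ⪰ 0`; moreover in case (i) one may take
`X = A† diag(b) U diag(b) A†*`. -/
theorem phaseCut_kernel_characterization {n p : ℕ}
    (A : Matrix (Fin n) (Fin p) ℂ) (Ad : Matrix (Fin p) (Fin n) ℂ)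
    (hPenrose : A * Ad * A = A ∧ Ad * A * Ad = Ad ∧
      (A * Ad)ᴴ = A * Ad ∧ (Ad * A)ᴴ = Ad * A)
    (b : Fin n → ℝ) (hb : ∀ i, b i ≠ 0)
    (M : Matrix (Fin n) (Fin n) ℂ)
    (hM : M = (Matrix.diagonal fun i => (b i : ℂ)) * (1 - A * Ad) *
      (Matrix.diagonal fun i => (b i : ℂ)))
    (U : Matrix (Fin n) (Fin n) ℂ) (hU : U.IsHermitian) :
    ((U.PosSemidef ∧ Matrix.trace (M * U) = 0) ↔
      (∃ X : Matrix (Fin p) (Fin p) ℂ, X.PosSemidef ∧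
        U = (Matrix.diagonal fun i => (b i : ℂ))⁻¹ * (A * X * Aᴴ) *
          (Matrix.diagonal fun i => (b i : ℂ))⁻¹)) ∧
    (U.PosSemidef ∧ Matrix.trace (M * U) = 0 →
      (Ad * (Matrix.diagonal fun i => (b i : ℂ)) * U *
        (Matrix.diagonal fun i => (b i : ℂ)) * Adᴴ).PosSemidef ∧
      U = (Matrix.diagonal fun i => (b i : ℂ))⁻¹ *
        (A * (Ad * (Matrix.diagonal fun i => (b i : ℂ)) * U *
          (Matrix.diagonal fun i => (b i : ℂ)) * Adᴴ) * Aᴴ) *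
        (Matrix.diagonal fun i => (b i : ℂ))⁻¹) := by
  set D : Matrix (Fin n) (Fin n) ℂ := Matrix.diagonal fun i => (b i : ℂ) with hD
  have hDH : Dᴴ = D := by
    rw [hD, Matrix.diagonal_conjTranspose]
    congr 1
    funext i
    simp [Pi.star_def]
  have hDdet : IsUnit D.det := by
    rw [hD, Matrix.det_diagonal]
    refine isUnit_iff_ne_zero.mpr (Finset.prod_ne_zero_iff.mpr fun i _ => ?_)
    exact_mod_cast hb i
  have hDinv : D⁻¹ * D = 1 := Matrix.nonsing_inv_mul D hDdet
  have hDinv' : D * D⁻¹ = 1 := Matrix.mul_nonsing_inv D hDdet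
  have hDinvH : D⁻¹ᴴ = D⁻¹ := by rw [Matrix.conjTranspose_nonsing_inv, hDH]
  set Q : Matrix (Fin n) (Fin n) ℂ := 1 - A * Ad with hQ
  have hQH : Qᴴ = Q := by
    rw [hQ, Matrix.conjTranspose_sub, Matrix.conjTranspose_one, hPenrose.2.2.1]
  have hP2 : A * Ad * (A * Ad) = A * Ad := by rw [← Matrix.mul_assoc, hPenrose.1]
  have hQ2 : Q * Q = Q := by
    rw [hQ, Matrix.sub_mul, Matrix.mul_sub, Matrix.mul_sub, Matrix.one_mul,
      Matrix.mul_one, hP2]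
    simp
  have hQA : Q * A = 0 := by
    rw [hQ, Matrix.sub_mul, Matrix.one_mul, hPenrose.1, sub_self]
  have forward : U.PosSemidef ∧ Matrix.trace (M * U) = 0 →
      (Ad * D * U * D * Adᴴ).PosSemidef ∧
      U = D⁻¹ * (A * (Ad * D * U * D * Adᴴ) * Aᴴ) * D⁻¹ := by
    rintro ⟨hUps, htr⟩
    set V : Matrix (Fin n) (Fin n) ℂ := D * U * D with hV
    have hVps : V.PosSemidef := by
      have := hUps.mul_mul_conjTranspose_same D
      rwa [hDH, ← hV] at this
    have hVH : Vᴴ = V := hVps.1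
    have htr2 : Matrix.trace (Q * V * Q) = 0 := by
      have e1 : Matrix.trace (Q * V * Q) = Matrix.trace (Q * Q * V) := by
        rw [Matrix.trace_mul_cycle, ← Matrix.mul_assoc]
      have e2 : Matrix.trace (M * U) = Matrix.trace (Q * V) := by
        calc Matrix.trace (M * U) = Matrix.trace (D * (Q * (D * U))) := by
              rw [hM]; simp only [Matrix.mul_assoc]
          _ = Matrix.trace ((Q * (D * U)) * D) := Matrix.trace_mul_comm _ _
          _ = Matrix.trace (Q * V) := by rw [hV]; simp only [Matrix.mul_assoc]
      rw [e1, hQ2, ← e2, htr]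
    have hQVQps : (Q * V * Q).PosSemidef := by
      have := hVps.mul_mul_conjTranspose_same Q
      rwa [hQH] at this
    have hQVQ : Q * V * Q = 0 := psd_trace_zero_eq_zero hQVQps htr2
    obtain ⟨B, hB⟩ := Matrix.posSemidef_iff_eq_transpose_mul_self.mp hVps
    have hBQ : B * Q = 0 := by
      have h0 : (B * Q)ᴴ * (B * Q) = 0 := by
        rw [Matrix.conjTranspose_mul, hQH]
        have h' : Q * Bᴴ * (B * Q) = Q * (Bᴴ * B) * Q := by
          simp only [Matrix.mul_assoc]
        rw [h', ← hB, hQVQ]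
      exact Matrix.conjTranspose_mul_self_eq_zero.mp h0
    have hVQ : V * Q = 0 := by
      rw [hB, Matrix.mul_assoc, hBQ, Matrix.mul_zero]
    have hQV : Q * V = 0 := by
      have h0 := congrArg Matrix.conjTranspose hVQ
      rwa [Matrix.conjTranspose_mul, hQH, hVH, Matrix.conjTranspose_zero] at h0
    have hPV : A * Ad * V = V := by
      rw [hQ, Matrix.sub_mul, Matrix.one_mul, sub_eq_zero] at hQV
      exact hQV.symm
    have hVP : V * (A * Ad) = V := by
      rw [hQ, Matrix.mul_sub, Matrix.mul_one, sub_eq_zero] at hVQ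
      exact hVQ.symm
    have hAdH : Adᴴ * Aᴴ = A * Ad := by
      rw [← Matrix.conjTranspose_mul, hPenrose.2.2.1]
    have hVrec : A * (Ad * V * Adᴴ) * Aᴴ = V := by
      calc A * (Ad * V * Adᴴ) * Aᴴ = A * Ad * (V * (Adᴴ * Aᴴ)) := by
            simp only [Matrix.mul_assoc]
        _ = A * Ad * V := by rw [hAdH, hVP]
        _ = V := hPV
    have key : Ad * D * U * D * Adᴴ = Ad * V * Adᴴ := by
      rw [hV]; simp only [Matrix.mul_assoc]
    constructor
    · rw [key]
      exact hVps.mul_mul_conjTranspose_same Ad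
    · rw [key, hVrec, hV]
      calc U = 1 * U * 1 := by rw [Matrix.one_mul, Matrix.mul_one]
        _ = (D⁻¹ * D) * U * (D * D⁻¹) := by rw [hDinv, hDinv']
        _ = D⁻¹ * (D * U * D) * D⁻¹ := by simp only [Matrix.mul_assoc]
  refine ⟨⟨fun h => ⟨_, (forward h).1, (forward h).2⟩, ?_⟩, forward⟩
  rintro ⟨X, hXps, hUeq⟩
  constructor
  · have h1 := (hXps.mul_mul_conjTranspose_same A).mul_mul_conjTranspose_same D⁻¹
    rw [hDinvH] at h1
    rw [hUeq]
    exact h1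
  · rw [hM, hUeq]
    have h0 : D * Q * D * (D⁻¹ * (A * X * Aᴴ) * D⁻¹) = 0 := by
      calc D * Q * D * (D⁻¹ * (A * X * Aᴴ) * D⁻¹)
          = D * (Q * ((D * D⁻¹) * (A * (X * (Aᴴ * D⁻¹))))) := by
            simp only [Matrix.mul_assoc]
        _ = D * (Q * (A * (X * (Aᴴ * D⁻¹)))) := by
            rw [hDinv', Matrix.one_mul]
        _ = D * ((Q * A) * (X * (Aᴴ * D⁻¹))) := by
            rw [← Matrix.mul_assoc Q A]
        _ = 0 := by rw [hQA, Matrix.zero_mul, Matrix.mul_zero]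
    rw [h0, Matrix.trace_zero]
end
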